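/- Let G be a connected graph with at least three vertices. Then the bicircular matroid B(G) is connected (2-connected as a matroid) if and only if G is not a cycle and has no pendent edge. -/

import Mathlib

set_option linter.unusedSectionVars false
set_option maxHeartbeats 1000000


open Matroid Set

namespace Bicirc

variable {α : Type*}

/-- A circuit of a matroid: a minimal dependent set. -/
def Circ (M : Matroid α) (C : Set α) : Prop :=
  M.Dep C ∧ ∀ D, D ⊂ C → M.Indep D

/-- A cocircuit: a circuit of the dual matroid. -/
def Cocirc (M : Matroid α) (C : Set α) : Prop := Circ M✶ C

/-- Deletion of a set from a matroid. -/
def Del (M : Matroid α) (X : Set α) : Matroid α := M ↾ (M.E \ X)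

/-- `e` is a loop of the matroid `M`. -/
def IsLoopE (M : Matroid α) (e : α) : Prop := Circ M {e}

/-- `e` is a coloop of the matroid `M`. -/
def IsColoopE (M : Matroid α) (e : α) : Prop := Cocirc M {e}

/-- A single element is a separator iff it is a loop or a coloop. -/
def SepElem (M : Matroid α) (e : α) : Prop := IsLoopE M e ∨ IsColoopE M e

/-- The rank of a set in a matroid (as a natural number). -/
noncomputable def rk (M : Matroid α) (X : Set α) : ℕ :=
  sSup {n | ∃ I, M.Indep I ∧ I ⊆ X ∧ n = I.ncard}

/-- The rank of a matroid. -/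
noncomputable def rkM (M : Matroid α) : ℕ := rk M M.E

/-- A matroid is connected if it is nonempty and every two distinct elements
lie in a common circuit. -/
def MConn (M : Matroid α) : Prop :=
  M.E.Nonempty ∧ ∀ e ∈ M.E, ∀ f ∈ M.E, e ≠ f → ∃ C, Circ M C ∧ e ∈ C ∧ f ∈ C

/-- `A` gives a `k`-separation `(A, M.E \ A)` of `M`. -/
def KSep (M : Matroid α) (k : ℕ) (A : Set α) : Prop :=
  A ⊆ M.E ∧ k ≤ A.ncard ∧ k ≤ (M.E \ A).ncard ∧
    rk M A + rk M (M.E \ A) < rkM M + k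

/-- A matroid is 3-connected if it has no `k`-separation for `k < 3`. -/
def ThreeConn (M : Matroid α) : Prop := ∀ k, 0 < k → k < 3 → ∀ A, ¬ KSep M k A

/-- Every pair of distinct elements of `C` lies in a common circuit of `M | C`. -/
def PairConn (M : Matroid α) (C : Set α) : Prop :=
  C ⊆ M.E ∧ ∀ e ∈ C, ∀ f ∈ C, e ≠ f → ∃ K, Circ (M ↾ C) K ∧ e ∈ K ∧ f ∈ K

/-- `C` is a connected component of the matroid `M`. -/
def IsComp (M : Matroid α) (C : Set α) : Prop :=
  C.Nonempty ∧ PairConn M C ∧ ∀ D, PairConn M D → C ⊆ D → D = C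

/-- A non-separating cocircuit: deleting it leaves a connected matroid. -/
def NonSepCocirc (M : Matroid α) (K : Set α) : Prop :=
  Cocirc M K ∧ MConn (Del M K)

/-- A cyclic flat: a flat whose restriction has no coloops. -/
def CyclicFlat (M : Matroid α) (Z : Set α) : Prop :=
  M.IsFlat Z ∧ ∀ e ∈ Z, ¬ IsColoopE (M ↾ Z) e

/-- `e` and `f` are clones: every cyclic flat contains one iff it contains the other. -/
def Clones (M : Matroid α) (e f : α) : Prop :=
  ∀ Z, CyclicFlat M Z → (e ∈ Z ↔ f ∈ Z)

/-- A clonal class: a maximal set of pairwise clone elements. -/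
def ClonalClass (M : Matroid α) (F : Set α) : Prop :=
  F ⊆ M.E ∧ (∀ e ∈ F, ∀ f ∈ F, Clones M e f) ∧
    ∀ F', F' ⊆ M.E → (∀ e ∈ F', ∀ f ∈ F', Clones M e f) → F ⊆ F' → F' = F

/-- Disjoint sets `X`, `Y` are skew: no circuit of `M` inside `X ∪ Y` meets both. -/
def Skew (M : Matroid α) (X Y : Set α) : Prop :=
  ∀ C, Circ M C → C ⊆ X ∪ Y → (C ∩ X = ∅ ∨ C ∩ Y = ∅)

/-- A good cocircuit. -/
def GoodCocirc (M : Matroid α) (K : Set α) : Prop :=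
  Cocirc M K ∧ (∃! D, IsComp (Del M K) D ∧ 1 < D.ncard) ∧
    ∀ x, IsColoopE (Del M K) x → ∀ D, IsComp (Del M K) D → 1 < D.ncard →
      ∃ F C, ClonalClass M F ∧ rk M F = 2 ∧ F ⊆ K ∧ Circ M C ∧ x ∈ C ∧
        C ∩ K ⊆ F ∧ (C ∩ K).ncard = 2 ∧ (C ∩ D).Nonempty

/-! ### Multigraphs -/

/-- A multigraph on vertex type `V` with edge type `E`: each edge has a pair of ends. -/
structure MGraph (V : Type*) (E : Type*) where
  ends : E → Sym2 V

variable {V E : Type*}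

/-- The vertices incident with at least one edge of `X`. -/
def VX (G : MGraph V E) (X : Set E) : Set V := {v | ∃ e ∈ X, v ∈ G.ends e}

/-- The set of edges incident with the vertex `v`. -/
def star (G : MGraph V E) (v : V) : Set E := {e | v ∈ G.ends e}

/-- The degree of `v` in the edge set `X` (loops count twice). -/
noncomputable def deg (G : MGraph V E) (X : Set E) (v : V) : ℕ :=
  ({e ∈ X | v ∈ G.ends e}).ncard + ({e ∈ X | G.ends e = s(v, v)}).ncard

/-- Two edges of `X` sharing a vertex. -/
def EAdj (G : MGraph V E) (X : Set E) (a b : E) : Prop :=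
  a ∈ X ∧ b ∈ X ∧ ∃ v, v ∈ G.ends a ∧ v ∈ G.ends b

/-- The subgraph `G[X]` is connected. -/
def ConnOn (G : MGraph V E) (X : Set E) : Prop :=
  ∀ a ∈ X, ∀ b ∈ X, Relation.ReflTransGen (EAdj G X) a b

/-- `C` is the edge set of a cycle of `G`. -/
def IsCycle (G : MGraph V E) (C : Set E) : Prop :=
  C.Nonempty ∧ ConnOn G C ∧ ∀ v ∈ VX G C, deg G C v = 2

/-- `X` contains no cycle. -/
def Acyclic (G : MGraph V E) (X : Set E) : Prop := ∀ C, C ⊆ X → ¬ IsCycle G C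

/-- `X` contains two distinct cycles. -/
def TwoCycles (G : MGraph V E) (X : Set E) : Prop :=
  ∃ C₁ C₂, C₁ ⊆ X ∧ C₂ ⊆ X ∧ IsCycle G C₁ ∧ IsCycle G C₂ ∧ C₁ ≠ C₂

/-- A bicycle: a minimal edge set inducing a connected subgraph with more than one cycle. -/
def IsBicycle (G : MGraph V E) (X : Set E) : Prop :=
  (ConnOn G X ∧ TwoCycles G X) ∧ ∀ Y, Y ⊂ X → ¬ (ConnOn G Y ∧ TwoCycles G Y)

/-- `P` is the edge set of a path of `G` with end-vertices `u` and `v`. -/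
def IsPathBtw (G : MGraph V E) (P : Set E) (u v : V) : Prop :=
  P.Nonempty ∧ ConnOn G P ∧ Acyclic G P ∧ u ≠ v ∧
    deg G P u = 1 ∧ deg G P v = 1 ∧ ∀ w ∈ VX G P, deg G P w ≤ 2

/-- `X` induces a theta subgraph of `G`. -/
def IsTheta (G : MGraph V E) (X : Set E) : Prop :=
  ∃ u v P₁ P₂ P₃, u ≠ v ∧
    IsPathBtw G P₁ u v ∧ IsPathBtw G P₂ u v ∧ IsPathBtw G P₃ u v ∧
    P₁ ∩ P₂ = ∅ ∧ P₁ ∩ P₃ = ∅ ∧ P₂ ∩ P₃ = ∅ ∧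
    VX G P₁ ∩ VX G P₂ = {u, v} ∧ VX G P₁ ∩ VX G P₃ = {u, v} ∧
    VX G P₂ ∩ VX G P₃ = {u, v} ∧ X = P₁ ∪ P₂ ∪ P₃

/-- `X` induces a loose handcuff of `G`. -/
def IsLooseHandcuff (G : MGraph V E) (X : Set E) : Prop :=
  ∃ C₁ C₂ P u v, IsCycle G C₁ ∧ IsCycle G C₂ ∧ VX G C₁ ∩ VX G C₂ = ∅ ∧
    IsPathBtw G P u v ∧ VX G P ∩ VX G C₁ = {u} ∧ VX G P ∩ VX G C₂ = {v} ∧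
    P ∩ C₁ = ∅ ∧ P ∩ C₂ = ∅ ∧ X = C₁ ∪ C₂ ∪ P

/-- `X` induces a tight handcuff of `G`. -/
def IsTightHandcuff (G : MGraph V E) (X : Set E) : Prop :=
  ∃ C₁ C₂ v, IsCycle G C₁ ∧ IsCycle G C₂ ∧ C₁ ∩ C₂ = ∅ ∧
    VX G C₁ ∩ VX G C₂ = {v} ∧ X = C₁ ∪ C₂

/-- Vertex adjacency via an edge. -/
def VAdj (G : MGraph V E) (u w : V) : Prop := ∃ e, u ∈ G.ends e ∧ w ∈ G.ends e

/-- The graph `G` is connected. -/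
def GConn (G : MGraph V E) : Prop := ∀ u w : V, Relation.ReflTransGen (VAdj G) u w

/-- The graph `G - x` is connected. -/
def ConnAvoid (G : MGraph V E) (x : V) : Prop :=
  ∀ u w : V, u ≠ x → w ≠ x →
    Relation.ReflTransGen
      (fun a b => a ≠ x ∧ b ≠ x ∧ ∃ e, x ∉ G.ends e ∧ a ∈ G.ends e ∧ b ∈ G.ends e) u w

/-- `G` is 2-connected: connected and with no cutvertex. -/
def TwoConnGraph (G : MGraph V E) : Prop := GConn G ∧ ∀ x, ConnAvoid G x

/-- `C` is (the edge set of) a connected component of `G[X]`. -/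
def IsGComp (G : MGraph V E) (X C : Set E) : Prop :=
  C ⊆ X ∧ C.Nonempty ∧ ConnOn G C ∧
    ∀ D, D ⊆ X → D.Nonempty → ConnOn G D → C ⊆ D → D = C

/-- The number of acyclic components of `G[X]`. -/
noncomputable def numAcyclicComps (G : MGraph V E) (X : Set E) : ℕ :=
  {C | IsGComp G X C ∧ Acyclic G C}.ncard

/-- `M` is the bicircular matroid of `G`: its circuits are precisely the bicycles. -/
def IsBicircOf (G : MGraph V E) (M : Matroid E) : Prop :=
  M.E = Set.univ ∧ ∀ C, Circ M C ↔ IsBicycle G C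

/-- The edge set `X` contains a pendent edge. -/
def PendentEdge (G : MGraph V E) (X : Set E) : Prop :=
  ∃ e ∈ X, ∃ w ∈ G.ends e, deg G X w = 1

/-- The graph `G - v` is a cycle. -/
def DelVIsCycle (G : MGraph V E) (v : V) : Prop :=
  IsCycle G {e | v ∉ G.ends e} ∧ ∀ w, w ≠ v → w ∈ VX G {e | v ∉ G.ends e}

/-! ### Matroid-labelled trees -/

/-- A matroid-labelled tree. -/
structure MTree (α : Type*) where
  ι : Type
  fin : Fintype ι
  lab : ι → Matroid α
  adj : ι → ι → Prop
  symm : ∀ i j, adj i j → adj j i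
  loopless : ∀ i, ¬ adj i i
  conn : ∀ i j, Relation.ReflTransGen adj i j
  acyc : ∀ i j, adj i j →
    ¬ Relation.ReflTransGen
        (fun a b => adj a b ∧ ¬(a = i ∧ b = j) ∧ ¬(a = j ∧ b = i)) i j
  card3 : (∃ i j : ι, i ≠ j) → ∀ i, 3 ≤ (lab i).E.ncard
  disj : ∀ i j, i ≠ j → ¬ adj i j → (lab i).E ∩ (lab j).E = ∅
  meet : ∀ i j, adj i j →
    ∃ e, (lab i).E ∩ (lab j).E = {e} ∧ ¬ SepElem (lab i) e ∧ ¬ SepElem (lab j) e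

/-- The basepoint elements of a matroid-labelled tree. -/
def MTree.bpts (T : MTree α) : Set α :=
  {e | ∃ i j, T.adj i j ∧ e ∈ (T.lab i).E ∧ e ∈ (T.lab j).E}

/-- The ground set of the matroid `M(T)`. -/
def MTree.ground (T : MTree α) : Set α := (⋃ i, (T.lab i).E) \ T.bpts

/-- The ground-set elements appearing in nodes of `S`. -/
def MTree.elems (T : MTree α) (S : Set T.ι) : Set α :=
  (⋃ i ∈ S, (T.lab i).E) ∩ T.ground

/-- `S` induces a connected subgraph of the tree. -/
def MTree.SubConn (T : MTree α) (S : Set T.ι) : Prop :=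
  ∀ i ∈ S, ∀ j ∈ S,
    Relation.ReflTransGen (fun a b => a ∈ S ∧ b ∈ S ∧ T.adj a b) i j

/-- The circuits of the matroid `M(T)`: glued along a connected subtree. -/
def MTree.IsTreeCircuit (T : MTree α) (C : Set α) : Prop :=
  ∃ (S : Set T.ι) (f : T.ι → Set α), S.Nonempty ∧ T.SubConn S ∧
    (∀ i ∈ S, Circ (T.lab i) (f i)) ∧
    (∀ i ∈ S, ∀ j, T.adj i j → ∀ e, e ∈ (T.lab i).E → e ∈ (T.lab j).E →
      (e ∈ f i ↔ j ∈ S)) ∧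
    C = (⋃ i ∈ S, f i) \ T.bpts

/-- `M = M(T)`. -/
def MTree.IsDecompOf (T : MTree α) (M : Matroid α) : Prop :=
  M.E = T.ground ∧ ∀ C, Circ M C ↔ T.IsTreeCircuit C

/-- A node whose matroid is a circuit. -/
def MTree.CircNode (T : MTree α) (i : T.ι) : Prop := Circ (T.lab i) (T.lab i).E

/-- A node whose matroid is a cocircuit. -/
def MTree.CocircNode (T : MTree α) (i : T.ι) : Prop := Cocirc (T.lab i) (T.lab i).E

/-- `T` is the canonical (Cunningham–Edmonds) decomposition tree of `M`. -/
def MTree.IsCanonical (T : MTree α) (M : Matroid α) : Prop :=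
  T.IsDecompOf M ∧
    (∀ i, ThreeConn (T.lab i) ∨ T.CircNode i ∨ T.CocircNode i) ∧
    ∀ i j, T.adj i j →
      ¬(T.CircNode i ∧ T.CircNode j) ∧ ¬(T.CocircNode i ∧ T.CocircNode j)

/-- The component of `T` minus the edge `{i, j}` containing `i`. -/
def MTree.side (T : MTree α) (i j : T.ι) : Set T.ι :=
  {k | Relation.ReflTransGen
        (fun a b => T.adj a b ∧ ¬(a = i ∧ b = j) ∧ ¬(a = j ∧ b = i)) i k}

/-- `(A, B)` is displayed by an edge of `T`. -/
def MTree.DispEdge (T : MTree α) (A B : Set α) : Prop :=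
  ∃ i j, T.adj i j ∧ A = T.elems (T.side i j) ∧ B = T.elems (T.side j i)

/-- The component of `T - n` containing `k`. -/
def MTree.compAvoid (T : MTree α) (n k : T.ι) : Set T.ι :=
  {k' | Relation.ReflTransGen (fun a b => T.adj a b ∧ a ≠ n ∧ b ≠ n) k k'}

/-- `(A, B)` is displayed by the node `n` of `T`. -/
def MTree.DispNode (T : MTree α) (n : T.ι) (A B : Set α) : Prop :=
  A ∪ B = T.ground ∧ A ∩ B = ∅ ∧
    ∀ k, k ≠ n →
      (T.elems (T.compAvoid n k) ⊆ A ∨ T.elems (T.compAvoid n k) ⊆ B)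

/-- `(A, B)` is a 2-separation of `M`. -/
def TwoSep (M : Matroid α) (A B : Set α) : Prop :=
  A ∪ B = M.E ∧ A ∩ B = ∅ ∧ 2 ≤ A.ncard ∧ 2 ≤ B.ncard ∧
    rk M A + rk M B ≤ rkM M + 1

/-- `X` is 2-separating in `M`. -/
def SepSet2 (M : Matroid α) (X : Set α) : Prop :=
  rk M X + rk M (M.E \ X) ≤ rkM M + 1

/-- A wedge relative to `A`: a maximal 2-separating nonempty proper subset of `M.E \ A`. -/
def Wedge (M : Matroid α) (A X : Set α) : Prop :=
  X ⊆ M.E \ A ∧ X.Nonempty ∧ X ≠ M.E \ A ∧ SepSet2 M X ∧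
    ∀ Y, Y ⊆ M.E \ A → Y.Nonempty → Y ≠ M.E \ A → SepSet2 M Y → X ⊆ Y → Y = X

/-- The rooted matroid `(N, L)` is bicircular: `N = B(H)` for some finite multigraph `H`
in which every element of `L` is a loop. -/
def RootedBicirc (N : Matroid α) (L : Set α) : Prop :=
  ∃ (V : Type) (_ : Fintype V) (_ : N.E.Finite) (G : MGraph V ↥N.E),
    (∀ D, Circ N D ↔ ∃ C : Set ↥N.E, IsBicycle G C ∧ D = Subtype.val '' C) ∧
    ∀ l : ↥N.E, l.1 ∈ L → (G.ends l).IsDiag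

end Bicirc


namespace Bicirc

open Set

lemma exists_minimal_subset_aux' {α : Type*} {P : Set α → Prop} :
    ∀ (n : ℕ) (X : Set α), X.Finite → X.ncard ≤ n → P X →
      ∃ Y, Y ⊆ X ∧ P Y ∧ ∀ Z, Z ⊂ Y → ¬ P Z := by
  intro n
  induction n with
  | zero =>
    intro X hX hn hP
    refine ⟨X, subset_rfl, hP, fun Z hZ _ => ?_⟩
    have hX0 : X = ∅ := (Set.ncard_eq_zero hX).mp (Nat.le_zero.mp hn)
    subst hX0
    exact hZ.ne (Set.subset_empty_iff.mp hZ.subset)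
  | succ n ih =>
    intro X hX hn hP
    by_cases h : ∀ Z, Z ⊂ X → ¬ P Z
    · exact ⟨X, subset_rfl, hP, h⟩
    · push_neg at h
      obtain ⟨Z, hZX, hPZ⟩ := h
      have hZfin := hX.subset hZX.subset
      have hlt : Z.ncard ≤ n := by
        have := Set.ncard_lt_ncard hZX hX
        omega
      obtain ⟨Y, hYZ, h1, h2⟩ := ih Z hZfin hlt hPZ
      exact ⟨Y, hYZ.trans hZX.subset, h1, h2⟩

lemma exists_minimal_subset {α : Type*} {P : Set α → Prop} {X : Set α} (hX : X.Finite)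
    (hP : P X) : ∃ Y, Y ⊆ X ∧ P Y ∧ ∀ Z, Z ⊂ Y → ¬ P Z :=
  exists_minimal_subset_aux' X.ncard X hX le_rfl hP


section AuxMatroid

variable {α : Type*}

variable {M : Matroid α} {C C₁ C₂ D X : Set α} {e f g x : α}

lemma indep_of_not_dep (h : ¬ M.Dep D) (hD : D ⊆ M.E) : M.Indep D := by
  by_contra hni
  exact h (Matroid.dep_iff.mpr ⟨hni, hD⟩)

lemma circ_of_min (hD : M.Dep C) (h : ∀ Z, Z ⊂ C → ¬ M.Dep Z) : Circ M C :=
  ⟨hD, fun D hDC => indep_of_not_dep (h D hDC) (hDC.subset.trans hD.subset_ground)⟩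

lemma dep_exists_circ (hD : M.Dep D) (hfin : D.Finite) : ∃ C, C ⊆ D ∧ Circ M C := by
  obtain ⟨Y, hY1, hY2, hY3⟩ := exists_minimal_subset (P := M.Dep) hfin hD
  exact ⟨Y, hY1, circ_of_min hY2 hY3⟩

lemma circ_incomp (h1 : Circ M C₁) (h2 : Circ M C₂) (hsub : C₁ ⊆ C₂) : C₁ = C₂ := by
  by_contra hne
  exact (h2.2 C₁ (ssubset_of_subset_of_ne hsub hne)).not_dep h1.1

lemma weak_elim (hfin : (C₁ ∪ C₂).Finite) (h1 : Circ M C₁) (h2 : Circ M C₂)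
    (hne : C₁ ≠ C₂) (hx : x ∈ C₁ ∩ C₂) : M.Dep ((C₁ ∪ C₂) \ {x}) := by
  have hE1 : C₁ ⊆ M.E := h1.1.subset_ground
  have hE2 : C₂ ⊆ M.E := h2.1.subset_ground
  have hUE : C₁ ∪ C₂ ⊆ M.E := union_subset hE1 hE2
  by_contra hnotdep
  have hXindep : M.Indep ((C₁ ∪ C₂) \ {x}) :=
    indep_of_not_dep hnotdep (diff_subset.trans hUE)
  obtain ⟨y, hy1, hy2⟩ : ∃ y, y ∈ C₁ ∧ y ∉ C₂ := by
    by_contra h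
    push_neg at h
    exact hne (circ_incomp h1 h2 h)
  have hIy : M.Indep (C₁ \ {y}) :=
    h1.2 _ (Set.sdiff_singleton_ssubset.mpr hy1)
  obtain ⟨J, hJ, hJsub⟩ :=
    hIy.subset_isBasis_of_subset (diff_subset.trans subset_union_left) hUE
  have hfinJ : J.Finite := hfin.subset hJ.subset
  have hyJ : y ∉ J := by
    intro hyJ
    refine h1.1.not_indep (hJ.indep.subset ?_)
    intro a ha
    by_cases hay : a = y
    · exact hay ▸ hyJ
    · exact hJsub ⟨ha, hay⟩
  obtain ⟨z, hz2, hzJ⟩ : ∃ z ∈ C₂, z ∉ J := by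
    by_contra h
    push_neg at h
    exact h2.1.not_indep (hJ.indep.subset h)
  have hzy : z ≠ y := fun h => hy2 (h ▸ hz2)
  have hJss : J ⊆ (C₁ ∪ C₂) \ {y, z} := by
    intro a ha
    refine ⟨hJ.subset ha, ?_⟩
    intro hmem
    rcases hmem with h | h
    · exact hyJ (h ▸ ha)
    · exact hzJ (h ▸ ha)
  have hyzsub : ({y, z} : Set α) ⊆ C₁ ∪ C₂ := by
    intro a ha
    rcases ha with h | h
    · exact Or.inl (h ▸ hy1)
    · exact Or.inr (h ▸ hz2)
  have hcard2 : ({y, z} : Set α).ncard = 2 := Set.ncard_pair (fun h => hzy h.symm)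
  have hJcard : J.ncard + 2 ≤ (C₁ ∪ C₂).ncard := by
    have h1' : J.ncard ≤ ((C₁ ∪ C₂) \ {y, z}).ncard :=
      Set.ncard_le_ncard hJss hfin.diff
    have h2' : ((C₁ ∪ C₂) \ {y, z}).ncard = (C₁ ∪ C₂).ncard - 2 := by
      rw [Set.ncard_diff hyzsub, hcard2]
    have h3' : 2 ≤ (C₁ ∪ C₂).ncard := by
      calc 2 = ({y, z} : Set α).ncard := hcard2.symm
      _ ≤ (C₁ ∪ C₂).ncard := Set.ncard_le_ncard hyzsub hfin
    omega
  have hXcard : ((C₁ ∪ C₂) \ {x}).ncard + 1 = (C₁ ∪ C₂).ncard := by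
    have hxU : x ∈ C₁ ∪ C₂ := Or.inl hx.1
    have := Set.ncard_diff_singleton_of_mem hxU
    have h1' : 0 < (C₁ ∪ C₂).ncard := (Set.ncard_pos hfin).mpr ⟨x, hxU⟩
    omega
  have hlt : J.encard < ((C₁ ∪ C₂) \ {x}).encard := by
    rw [← hfinJ.cast_ncard_eq, ← hfin.diff.cast_ncard_eq]
    exact_mod_cast (by omega : J.ncard < ((C₁ ∪ C₂) \ {x}).ncard)
  obtain ⟨w, hw, hwindep⟩ := hJ.indep.augment hXindep hlt
  exact hw.2 (hJ.mem_of_insert_indep (diff_subset hw.1) hwindep)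

lemma strong_elim_aux :
    ∀ (n : ℕ) (C₁ C₂ : Set α) (x f : α), (C₁ ∪ C₂).Finite → (C₁ ∪ C₂).ncard ≤ n →
      Circ M C₁ → Circ M C₂ → x ∈ C₁ ∩ C₂ → f ∈ C₁ \ C₂ →
      ∃ C, Circ M C ∧ f ∈ C ∧ C ⊆ (C₁ ∪ C₂) \ {x} := by
  intro n
  induction n with
  | zero =>
    intro C₁ C₂ x f hfin hn _ _ hx _
    have : C₁ ∪ C₂ = ∅ := (Set.ncard_eq_zero hfin).mp (Nat.le_zero.mp hn)
    exact absurd (this ▸ (Or.inl hx.1 : x ∈ C₁ ∪ C₂)) (Set.notMem_empty x)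
  | succ n ih =>
    intro C₁ C₂ x f hfin hn h1 h2 hx hf
    have hne : C₁ ≠ C₂ := fun h => hf.2 (h ▸ hf.1)
    have hdep := weak_elim hfin h1 h2 hne hx
    obtain ⟨C₃, hC₃sub, hC₃⟩ := dep_exists_circ hdep hfin.diff
    by_cases hf3 : f ∈ C₃
    · exact ⟨C₃, hC₃, hf3, hC₃sub⟩
    have hx3 : x ∉ C₃ := fun h => (hC₃sub h).2 rfl
    obtain ⟨z, hz3, hz2, hz1⟩ : ∃ z, z ∈ C₃ ∧ z ∈ C₂ ∧ z ∉ C₁ := by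
      by_contra h
      push_neg at h
      have hsub : C₃ ⊆ C₁ := by
        intro a ha
        rcases (hC₃sub ha).1 with h' | h'
        · exact h'
        · by_contra hac
          exact hac (h a ha h')
      exact hx3 ((circ_incomp hC₃ h1 hsub) ▸ hx.1)
    -- first recursive call : circuits C₂, C₃, pivot z, keep x
    have hsub23 : C₂ ∪ C₃ ⊆ C₁ ∪ C₂ :=
      union_subset subset_union_right (hC₃sub.trans (diff_subset.trans subset_rfl))
    have hss23 : C₂ ∪ C₃ ⊂ C₁ ∪ C₂ := by
      refine ssubset_of_subset_of_ne hsub23 (fun h => ?_)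
      have : f ∈ C₂ ∪ C₃ := h ▸ (Or.inl hf.1 : f ∈ C₁ ∪ C₂)
      rcases this with h' | h'
      · exact hf.2 h'
      · exact hf3 h'
    have hcard23 : (C₂ ∪ C₃).ncard ≤ n := by
      have := Set.ncard_lt_ncard hss23 hfin
      omega
    obtain ⟨C₄, hC₄, hx4, hC₄sub⟩ := ih C₂ C₃ z x (hfin.subset hsub23) hcard23 h2 hC₃
      ⟨hz2, hz3⟩ ⟨hx.2, hx3⟩
    -- second recursive call : circuits C₁, C₄, pivot x, keep f
    have hC₄sub' : C₄ ⊆ C₁ ∪ C₂ := (hC₄sub.trans diff_subset).trans hsub23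
    have hsub14 : C₁ ∪ C₄ ⊆ C₁ ∪ C₂ := union_subset subset_union_left hC₄sub'
    have hz4 : z ∉ C₄ := fun h => (hC₄sub h).2 rfl
    have hss14 : C₁ ∪ C₄ ⊂ C₁ ∪ C₂ := by
      refine ssubset_of_subset_of_ne hsub14 (fun h => ?_)
      have : z ∈ C₁ ∪ C₄ := h ▸ (Or.inr hz2 : z ∈ C₁ ∪ C₂)
      rcases this with h' | h'
      · exact hz1 h'
      · exact hz4 h'
    have hcard14 : (C₁ ∪ C₄).ncard ≤ n := by
      have := Set.ncard_lt_ncard hss14 hfin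
      omega
    have hf4 : f ∉ C₄ := by
      intro h
      rcases (hC₄sub h).1 with h' | h'
      · exact hf.2 h'
      · exact hf3 h'
    obtain ⟨C₅, hC₅, hf5, hC₅sub⟩ := ih C₁ C₄ x f (hfin.subset hsub14) hcard14 h1 hC₄
      ⟨hx.1, hx4⟩ ⟨hf.1, hf4⟩
    exact ⟨C₅, hC₅, hf5, hC₅sub.trans (diff_subset_diff_left hsub14)⟩


lemma strong_elim (hfin : (C₁ ∪ C₂).Finite) (h1 : Circ M C₁) (h2 : Circ M C₂)
    (hx : x ∈ C₁ ∩ C₂) (hf : f ∈ C₁ \ C₂) :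
    ∃ C, Circ M C ∧ f ∈ C ∧ C ⊆ (C₁ ∪ C₂) \ {x} :=
  strong_elim_aux (C₁ ∪ C₂).ncard C₁ C₂ x f hfin le_rfl h1 h2 hx hf

lemma circ_trans (hfinE : M.E.Finite) (hC₁ : Circ M C₁) (he : e ∈ C₁) (hC₂ : Circ M C₂)
    (hg : g ∈ C₂) (hmeet : (C₁ ∩ C₂).Nonempty) :
    e = g ∨ ∃ C, Circ M C ∧ e ∈ C ∧ g ∈ C := by
  by_cases heg : e = g
  · exact Or.inl heg
  refine Or.inr ?_
  -- choose D in the family minimizing (D \ C₁).ncard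
  set F : Set α → Prop := fun D => Circ M D ∧ g ∈ D ∧ (D ∩ C₁).Nonempty with hF
  have hFC₂ : F C₂ := ⟨hC₂, hg, hmeet.imp (fun a ha => ⟨ha.2, ha.1⟩)⟩
  set S : Set ℕ := {k | ∃ D, F D ∧ (D \ C₁).ncard = k} with hS
  have hSne : S.Nonempty := ⟨(C₂ \ C₁).ncard, C₂, hFC₂, rfl⟩
  obtain ⟨D, hFD, hDcard⟩ : ∃ D, F D ∧ (D \ C₁).ncard = sInf S := Nat.sInf_mem hSne
  have hmin : ∀ D', F D' → (D \ C₁).ncard ≤ (D' \ C₁).ncard := by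
    intro D' hD'
    rw [hDcard]
    exact Nat.sInf_le ⟨D', hD', rfl⟩
  obtain ⟨hDcirc, hgD, hDC₁⟩ := hFD
  by_cases heD : e ∈ D
  · exact ⟨D, hDcirc, heD, hgD⟩
  obtain ⟨x, hxD, hxC₁⟩ := hDC₁
  have hfinU : (C₁ ∪ D).Finite := hfinE.subset (union_subset hC₁.1.subset_ground hDcirc.1.subset_ground)
  obtain ⟨C₃, hC₃, he3, hC₃sub⟩ := strong_elim hfinU hC₁ hDcirc ⟨hxC₁, hxD⟩ ⟨he, heD⟩
  by_cases hg3 : g ∈ C₃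
  · exact ⟨C₃, hC₃, he3, hg3⟩
  have hx3 : x ∉ C₃ := fun h => (hC₃sub h).2 rfl
  obtain ⟨y, hy3, hyD, hyC₁⟩ : ∃ y, y ∈ C₃ ∧ y ∈ D ∧ y ∉ C₁ := by
    by_contra h
    push_neg at h
    have hsub : C₃ ⊆ C₁ := by
      intro a ha
      rcases (hC₃sub ha).1 with h' | h'
      · exact h'
      · by_contra hac
        exact hac (h a ha h')
    exact hx3 ((circ_incomp hC₃ hC₁ hsub) ▸ hxC₁)
  have hfinU2 : (D ∪ C₃).Finite := hfinE.subset (union_subset hDcirc.1.subset_ground hC₃.1.subset_ground)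
  obtain ⟨C₄, hC₄, hg4, hC₄sub⟩ := strong_elim hfinU2 hDcirc hC₃ ⟨hyD, hy3⟩ ⟨hgD, hg3⟩
  have hy4 : y ∉ C₄ := fun h => (hC₄sub h).2 rfl
  have hC₄D : ∀ a ∈ C₄, a ∉ C₁ → a ∈ D := by
    intro a ha haC₁
    rcases (hC₄sub ha).1 with h' | h'
    · exact h'
    · rcases (hC₃sub h').1 with h'' | h''
      · exact absurd h'' haC₁
      · exact h''
  by_cases hmeet4 : (C₄ ∩ C₁).Nonempty
  · -- contradicts minimality
    exfalso
    have hF4 : F C₄ := ⟨hC₄, hg4, hmeet4⟩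
    have hsub4 : C₄ \ C₁ ⊆ (D \ C₁) \ {y} := by
      intro a ha
      exact ⟨⟨hC₄D a ha.1 ha.2, ha.2⟩, fun h => hy4 (h ▸ ha.1)⟩
    have hss : C₄ \ C₁ ⊂ D \ C₁ :=
      ssubset_of_subset_of_ssubset hsub4 (Set.sdiff_singleton_ssubset.mpr ⟨hyD, hyC₁⟩)
    have := Set.ncard_lt_ncard hss (hfinE.subset (diff_subset.trans hDcirc.1.subset_ground))
    exact absurd (hmin C₄ hF4) (by omega)
  · -- C₄ ⊊ D, contradiction with incomparability
    exfalso
    have hsub4 : C₄ ⊆ D := by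
      intro a ha
      refine hC₄D a ha (fun hc => hmeet4 ⟨a, ha, hc⟩)
    have := circ_incomp hC₄ hDcirc hsub4
    exact hy4 (this ▸ hyD)


end AuxMatroid

section AuxGraph

variable {V E : Type*} {G : MGraph V E} {X Y C K A B : Set E} {e f g a b : E} {u v w : V}

/-! ### basics -/

lemma sym2_exists_rep (p : Sym2 V) : ∃ a b, p = s(a, b) := by
  induction p using Sym2.ind with
  | _ a b => exact ⟨a, b, rfl⟩

lemma sym2_exists_mem (p : Sym2 V) : ∃ v, v ∈ p := by
  induction p using Sym2.ind with
  | _ a b => exact ⟨a, by simp⟩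

lemma mem_VX_of (he : e ∈ X) (hv : v ∈ G.ends e) : v ∈ VX G X := ⟨e, he, hv⟩

lemma VX_mono (h : X ⊆ Y) : VX G X ⊆ VX G Y :=
  fun _ ⟨e, he, hv⟩ => ⟨e, h he, hv⟩

lemma VX_union : VX G (X ∪ Y) = VX G X ∪ VX G Y := by
  ext v
  constructor
  · rintro ⟨e, he | he, hv⟩
    · exact Or.inl ⟨e, he, hv⟩
    · exact Or.inr ⟨e, he, hv⟩
  · rintro (⟨e, he, hv⟩ | ⟨e, he, hv⟩)
    · exact ⟨e, Or.inl he, hv⟩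
    · exact ⟨e, Or.inr he, hv⟩

lemma VX_nonempty (h : X.Nonempty) : (VX G X).Nonempty := by
  obtain ⟨e, he⟩ := h
  obtain ⟨v, hv⟩ := sym2_exists_mem (G.ends e)
  exact ⟨v, e, he, hv⟩

lemma VX_singleton (hab : G.ends e = s(u, w)) : VX G {e} = {u, w} := by
  ext x
  constructor
  · rintro ⟨f, hf, hv⟩
    rcases hf with rfl
    rw [hab, Sym2.mem_iff] at hv
    exact hv
  · rintro (rfl | rfl)
    · exact ⟨e, rfl, by rw [hab]; simp⟩
    · exact ⟨e, rfl, by rw [hab]; simp⟩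

/-! ### degree -/

section deg
variable [Fintype V] [Fintype E]

lemma deg_mono (h : X ⊆ Y) : deg G X v ≤ deg G Y v := by
  unfold deg
  exact add_le_add (Set.ncard_le_ncard (fun e he => ⟨h he.1, he.2⟩) (Set.toFinite _))
    (Set.ncard_le_ncard (fun e he => ⟨h he.1, he.2⟩) (Set.toFinite _))

lemma one_le_deg (hv : v ∈ VX G X) : 1 ≤ deg G X v := by
  obtain ⟨e, he, hve⟩ := hv
  have : 0 < ({e ∈ X | v ∈ G.ends e}).ncard :=
    (Set.ncard_pos (Set.toFinite _)).mpr ⟨e, he, hve⟩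
  unfold deg
  omega

lemma mem_VX_of_deg (h : 1 ≤ deg G X v) : v ∈ VX G X := by
  unfold deg at h
  by_cases h1 : ({e ∈ X | v ∈ G.ends e}).ncard = 0
  · have h2 : 0 < ({e ∈ X | G.ends e = s(v, v)}).ncard := by omega
    obtain ⟨e, he, hve⟩ := (Set.ncard_pos (Set.toFinite _)).mp h2
    exact ⟨e, he, by rw [hve]; simp⟩
  · obtain ⟨e, he, hve⟩ := (Set.ncard_pos (Set.toFinite _)).mp (Nat.pos_of_ne_zero h1)
    exact ⟨e, he, hve⟩

lemma deg_eq_zero (h : v ∉ VX G X) : deg G X v = 0 := by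
  by_contra hne
  exact h (mem_VX_of_deg (by omega))

lemma deg_union (hdisj : X ∩ Y = ∅) : deg G (X ∪ Y) v = deg G X v + deg G Y v := by
  unfold deg
  have h1 : {e ∈ X ∪ Y | v ∈ G.ends e} = {e ∈ X | v ∈ G.ends e} ∪ {e ∈ Y | v ∈ G.ends e} := by
    ext e; constructor
    · rintro ⟨he | he, hv⟩
      exacts [Or.inl ⟨he, hv⟩, Or.inr ⟨he, hv⟩]
    · rintro (⟨he, hv⟩ | ⟨he, hv⟩)
      exacts [⟨Or.inl he, hv⟩, ⟨Or.inr he, hv⟩]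
  have h2 : {e ∈ X ∪ Y | G.ends e = s(v, v)} =
      {e ∈ X | G.ends e = s(v, v)} ∪ {e ∈ Y | G.ends e = s(v, v)} := by
    ext e; constructor
    · rintro ⟨he | he, hv⟩
      exacts [Or.inl ⟨he, hv⟩, Or.inr ⟨he, hv⟩]
    · rintro (⟨he, hv⟩ | ⟨he, hv⟩)
      exacts [⟨Or.inl he, hv⟩, ⟨Or.inr he, hv⟩]
  have d1 : Disjoint {e ∈ X | v ∈ G.ends e} {e ∈ Y | v ∈ G.ends e} := by
    rw [Set.disjoint_left]
    rintro e ⟨he, -⟩ ⟨he', -⟩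
    exact Set.eq_empty_iff_forall_notMem.mp hdisj e ⟨he, he'⟩
  have d2 : Disjoint {e ∈ X | G.ends e = s(v, v)} {e ∈ Y | G.ends e = s(v, v)} := by
    rw [Set.disjoint_left]
    rintro e ⟨he, -⟩ ⟨he', -⟩
    exact Set.eq_empty_iff_forall_notMem.mp hdisj e ⟨he, he'⟩
  rw [h1, h2, Set.ncard_union_eq d1 (Set.toFinite _) (Set.toFinite _),
    Set.ncard_union_eq d2 (Set.toFinite _) (Set.toFinite _)]
  ring

end deg

/-! ### adjacency and connectivity -/

lemma EAdj.symm' (h : EAdj G X a b) : EAdj G X b a :=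
  ⟨h.2.1, h.1, h.2.2.imp (fun _ hv => ⟨hv.2, hv.1⟩)⟩

lemma eadj_mono (h : X ⊆ Y) (hab : EAdj G X a b) : EAdj G Y a b :=
  ⟨h hab.1, h hab.2.1, hab.2.2⟩

lemma rtg_symm (h : Relation.ReflTransGen (EAdj G X) a b) :
    Relation.ReflTransGen (EAdj G X) b a :=
  (@Relation.ReflTransGen.stdSymm _ _ ⟨fun _ _ h' => h'.symm'⟩).symm _ _ h

lemma rtg_mono (h : X ⊆ Y) (hab : Relation.ReflTransGen (EAdj G X) a b) :
    Relation.ReflTransGen (EAdj G Y) a b :=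
  Relation.ReflTransGen.mono (fun _ _ h' => eadj_mono h h') _ _ hab

lemma connOn_singleton : ConnOn G {e} := by
  rintro a rfl b rfl
  exact Relation.ReflTransGen.refl

lemma connOn_union (hX : ConnOn G X) (hY : ConnOn G Y) (hv1 : v ∈ VX G X) (hv2 : v ∈ VX G Y) :
    ConnOn G (X ∪ Y) := by
  obtain ⟨ex, hex, hvx⟩ := hv1
  obtain ⟨ey, hey, hvy⟩ := hv2
  have key : ∀ a ∈ X, ∀ b ∈ Y, Relation.ReflTransGen (EAdj G (X ∪ Y)) a b := by
    intro a ha b hb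
    have h1 : Relation.ReflTransGen (EAdj G (X ∪ Y)) a ex :=
      rtg_mono subset_union_left (hX a ha ex hex)
    have h2 : EAdj G (X ∪ Y) ex ey := ⟨Or.inl hex, Or.inr hey, v, hvx, hvy⟩
    have h3 : Relation.ReflTransGen (EAdj G (X ∪ Y)) ey b :=
      rtg_mono subset_union_right (hY ey hey b hb)
    exact (h1.tail h2).trans h3
  rintro a (ha | ha) b (hb | hb)
  · exact rtg_mono subset_union_left (hX a ha b hb)
  · exact key a ha b hb
  · exact rtg_symm (key b hb a ha)
  · exact rtg_mono subset_union_right (hY a ha b hb)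

lemma exists_adj_out (hX : ConnOn G X) (hYX : Y ⊆ X) (hYne : Y.Nonempty) (hne : Y ≠ X) :
    ∃ g, g ∈ X \ Y ∧ ∃ v, v ∈ VX G Y ∧ v ∈ G.ends g := by
  obtain ⟨y, hy⟩ := hYne
  obtain ⟨x, hxX, hxY⟩ := Set.exists_of_ssubset (ssubset_of_subset_of_ne hYX hne)
  have claim : ∀ b, Relation.ReflTransGen (EAdj G X) y b →
      b ∈ Y ∨ ∃ g, g ∈ X \ Y ∧ ∃ v, v ∈ VX G Y ∧ v ∈ G.ends g := by
    intro b hb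
    induction hb with
    | refl => exact Or.inl hy
    | tail h₁ h₂ ih =>
      rcases ih with hbY | hdone
      · rename_i b' c
        by_cases hcY : c ∈ Y
        · exact Or.inl hcY
        · obtain ⟨hbX, hcX, v, hv1, hv2⟩ := h₂
          exact Or.inr ⟨c, ⟨hcX, hcY⟩, v, ⟨b', hbY, hv1⟩, hv2⟩
      · exact Or.inr hdone
  rcases claim x (hX y (hYX hy) x hxX) with h | h
  · exact absurd h hxY
  · exact h

section counting
variable [Fintype V] [Fintype E]

lemma excess_aux : ∀ (n : ℕ) (X Y : Set E), (X \ Y).ncard ≤ n → ConnOn G X → ConnOn G Y →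
    Y ⊆ X → Y.Nonempty → Y.ncard + (VX G X).ncard ≤ X.ncard + (VX G Y).ncard := by
  intro n
  induction n with
  | zero =>
    intro X Y hn _ _ hYX _
    have h0 : X \ Y = ∅ := (Set.ncard_eq_zero (Set.toFinite _)).mp (Nat.le_zero.mp hn)
    have : X = Y := Set.Subset.antisymm (fun x hx => by
      by_contra hxy
      exact absurd (Set.eq_empty_iff_forall_notMem.mp h0 x ⟨hx, hxy⟩) (fun h => h)) hYX
    subst this
    omega
  | succ n ih =>
    intro X Y hn hX hY hYX hYne
    by_cases heq : Y = X
    · subst heq; omega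
    obtain ⟨g, hg, v, hvY, hvg⟩ := exists_adj_out hX hYX hYne heq
    set Y' := insert g Y with hY'def
    have hgY : g ∉ Y := hg.2
    have hY'conn : ConnOn G Y' := by
      have := connOn_union (X := Y) (Y := {g}) hY connOn_singleton hvY ⟨g, rfl, hvg⟩
      rwa [Set.union_singleton] at this
    have hY'X : Y' ⊆ X := Set.insert_subset hg.1 hYX
    have hmeas : (X \ Y').ncard ≤ n := by
      have h1 : X \ Y' = (X \ Y) \ {g} := by
        rw [hY'def]
        ext x
        simp only [Set.mem_diff, Set.mem_insert_iff, Set.mem_singleton_iff]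
        tauto
      have h2 : g ∈ X \ Y := hg
      have := Set.ncard_diff_singleton_of_mem h2
      have h3 : 0 < (X \ Y).ncard := (Set.ncard_pos (Set.toFinite _)).mpr ⟨g, h2⟩
      rw [h1, this]
      omega
    have hcard : Y'.ncard = Y.ncard + 1 := Set.ncard_insert_of_notMem hgY (Set.toFinite _)
    have hVX' : (VX G Y').ncard ≤ (VX G Y).ncard + 1 := by
      obtain ⟨p, q, hpq⟩ := sym2_exists_rep (G.ends g)
      rw [hpq, Sym2.mem_iff] at hvg
      have hsub : ∀ w', VX G Y' ⊆ insert w' (VX G Y) → (VX G Y').ncard ≤ (VX G Y).ncard + 1 :=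
        fun w' hs => le_trans (Set.ncard_le_ncard hs (Set.toFinite _))
          (Set.ncard_insert_le _ _)
      rcases hvg with rfl | rfl
      · refine hsub q ?_
        rintro u ⟨e', he', hu⟩
        rcases he' with rfl | he'
        · rw [hpq, Sym2.mem_iff] at hu
          rcases hu with rfl | rfl
          · exact Or.inr hvY
          · exact Or.inl rfl
        · exact Or.inr ⟨e', he', hu⟩
      · refine hsub p ?_
        rintro u ⟨e', he', hu⟩
        rcases he' with rfl | he'
        · rw [hpq, Sym2.mem_iff] at hu
          rcases hu with rfl | rfl
          · exact Or.inl rfl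
          · exact Or.inr hvY
        · exact Or.inr ⟨e', he', hu⟩
    have := ih X Y' hmeas hX hY'conn hY'X ⟨g, Or.inl rfl⟩
    omega

lemma excess (hX : ConnOn G X) (hY : ConnOn G Y) (hYX : Y ⊆ X) (hYne : Y.Nonempty) :
    Y.ncard + (VX G X).ncard ≤ X.ncard + (VX G Y).ncard :=
  excess_aux (X \ Y).ncard X Y le_rfl hX hY hYX hYne

lemma conn_card (hX : ConnOn G X) (hne : X.Nonempty) : (VX G X).ncard ≤ X.ncard + 1 := by
  obtain ⟨e, he⟩ := hne
  have h := excess hX connOn_singleton (Set.singleton_subset_iff.mpr he) ⟨e, rfl⟩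
  obtain ⟨p, q, hpq⟩ := sym2_exists_rep (G.ends e)
  have h1 : (VX G {e}).ncard ≤ 2 := by
    rw [VX_singleton hpq]
    exact le_trans (Set.ncard_insert_le _ _) (by simp)
  have h2 : ({e} : Set E).ncard = 1 := Set.ncard_singleton e
  omega

end counting

/-! ### two-piece excess -/

section excess2
variable [Fintype V] [Fintype E]

lemma vx_disj_edge_disj {Y₁ Y₂ : Set E} (h : VX G Y₁ ∩ VX G Y₂ = ∅) : Y₁ ∩ Y₂ = ∅ := by
  rw [Set.eq_empty_iff_forall_notMem]
  rintro e ⟨h1, h2⟩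
  obtain ⟨v, hv⟩ := sym2_exists_mem (G.ends e)
  exact Set.eq_empty_iff_forall_notMem.mp h v ⟨⟨e, h1, hv⟩, ⟨e, h2, hv⟩⟩

lemma excess_two_aux : ∀ (n : ℕ) (X Y₁ Y₂ : Set E), (X \ Y₁).ncard ≤ n →
    ConnOn G X → ConnOn G Y₁ → ConnOn G Y₂ → Y₁ ⊆ X → Y₂ ⊆ X → Y₁.Nonempty → Y₂.Nonempty →
    VX G Y₁ ∩ VX G Y₂ = ∅ →
    Y₁.ncard + Y₂.ncard + 1 + (VX G X).ncard ≤ X.ncard + (VX G Y₁).ncard + (VX G Y₂).ncard := by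
  intro n
  induction n with
  | zero =>
    intro X Y₁ Y₂ hn _ _ _ hY₁X hY₂X _ hY₂ne hdisj
    exfalso
    have h0 : X \ Y₁ = ∅ := (Set.ncard_eq_zero (Set.toFinite _)).mp (Nat.le_zero.mp hn)
    obtain ⟨e, he⟩ := hY₂ne
    have heY₁ : e ∈ Y₁ := by
      by_contra h
      exact Set.eq_empty_iff_forall_notMem.mp h0 e ⟨hY₂X he, h⟩
    obtain ⟨v, hv⟩ := sym2_exists_mem (G.ends e)
    exact Set.eq_empty_iff_forall_notMem.mp hdisj v ⟨⟨e, heY₁, hv⟩, ⟨e, he, hv⟩⟩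
  | succ n ih =>
    intro X Y₁ Y₂ hn hX hY₁ hY₂ hY₁X hY₂X hY₁ne hY₂ne hdisj
    have hne : Y₁ ≠ X := by
      rintro rfl
      obtain ⟨e, he⟩ := hY₂ne
      obtain ⟨v, hv⟩ := sym2_exists_mem (G.ends e)
      exact Set.eq_empty_iff_forall_notMem.mp hdisj v ⟨⟨e, hY₂X he, hv⟩, ⟨e, he, hv⟩⟩
    obtain ⟨g, hg, v, hvY₁, hvg⟩ := exists_adj_out hX hY₁X hY₁ne hne
    have hgY₂ : g ∉ Y₂ := by
      intro h
      exact Set.eq_empty_iff_forall_notMem.mp hdisj v ⟨hvY₁, ⟨g, h, hvg⟩⟩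
    obtain ⟨p, q, hpq⟩ := sym2_exists_rep (G.ends g)
    by_cases htouch : ∃ w, w ∈ G.ends g ∧ w ∈ VX G Y₂
    · -- glue everything together and use single excess
      obtain ⟨w, hwg, hwY₂⟩ := htouch
      have hvw : v ≠ w := by
        rintro rfl
        exact Set.eq_empty_iff_forall_notMem.mp hdisj v ⟨hvY₁, hwY₂⟩
      set W := (Y₁ ∪ {g}) ∪ Y₂ with hW
      have hWconn : ConnOn G W := by
        refine connOn_union (connOn_union hY₁ connOn_singleton hvY₁ ⟨g, rfl, hvg⟩) hY₂ ?_ hwY₂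
        rw [VX_union]
        exact Or.inr ⟨g, rfl, hwg⟩
      have hWX : W ⊆ X := by
        refine Set.union_subset (Set.union_subset hY₁X ?_) hY₂X
        exact Set.singleton_subset_iff.mpr hg.1
      have hWne : W.Nonempty := ⟨g, Or.inl (Or.inr rfl)⟩
      have hWcard : W.ncard = Y₁.ncard + Y₂.ncard + 1 := by
        have e1 : Disjoint Y₁ {g} := by
          rw [Set.disjoint_left]
          rintro a ha rfl
          exact hg.2 ha
        have e2 : Disjoint (Y₁ ∪ {g}) Y₂ := by
          rw [Set.disjoint_left]
          rintro a (ha | rfl) ha2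
          · exact Set.eq_empty_iff_forall_notMem.mp (vx_disj_edge_disj hdisj) a ⟨ha, ha2⟩
          · exact hgY₂ ha2
        rw [hW, Set.ncard_union_eq e2 (Set.toFinite _) (Set.toFinite _),
          Set.ncard_union_eq e1 (Set.toFinite _) (Set.toFinite _), Set.ncard_singleton]
        ring
      have hVW : (VX G W).ncard ≤ (VX G Y₁).ncard + (VX G Y₂).ncard := by
        have hsub : VX G W ⊆ VX G Y₁ ∪ VX G Y₂ := by
          rintro u ⟨e', he', hu⟩
          rcases he' with (he' | rfl) | he'
          · exact Or.inl ⟨e', he', hu⟩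
          · -- u ∈ ends g = s(p,q) ; {p,q} = {v,w}
            have hvpq := hpq ▸ hvg
            have hwpq := hpq ▸ hwg
            rw [Sym2.mem_iff] at hvpq hwpq
            rw [hpq, Sym2.mem_iff] at hu
            have : u = v ∨ u = w := by
              rcases hvpq with rfl | rfl <;> rcases hwpq with rfl | rfl <;> tauto
            rcases this with rfl | rfl
            · exact Or.inl hvY₁
            · exact Or.inr hwY₂
          · exact Or.inr ⟨e', he', hu⟩
        calc (VX G W).ncard ≤ (VX G Y₁ ∪ VX G Y₂).ncard :=
              Set.ncard_le_ncard hsub (Set.toFinite _)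
        _ ≤ _ := Set.ncard_union_le _ _
      have := excess hX hWconn hWX hWne
      omega
    · -- extend Y₁ by g
      push_neg at htouch
      set Y₁' := insert g Y₁ with hY₁'
      have hconn' : ConnOn G Y₁' := by
        have := connOn_union hY₁ connOn_singleton hvY₁ ⟨g, rfl, hvg⟩
        rwa [Set.union_singleton] at this
      have hdisj' : VX G Y₁' ∩ VX G Y₂ = ∅ := by
        rw [Set.eq_empty_iff_forall_notMem]
        rintro u ⟨⟨e', he', hu⟩, hu2⟩
        rcases he' with rfl | he'
        · exact htouch u hu hu2
        · exact Set.eq_empty_iff_forall_notMem.mp hdisj u ⟨⟨e', he', hu⟩, hu2⟩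
      have hmeas : (X \ Y₁').ncard ≤ n := by
        have h1 : X \ Y₁' = (X \ Y₁) \ {g} := by
          rw [hY₁']
          ext x
          simp only [Set.mem_diff, Set.mem_insert_iff, Set.mem_singleton_iff]
          tauto
        have := Set.ncard_diff_singleton_of_mem (show g ∈ X \ Y₁ from hg)
        have h3 : 0 < (X \ Y₁).ncard := (Set.ncard_pos (Set.toFinite _)).mpr ⟨g, hg⟩
        rw [h1, this]
        omega
      have hcard : Y₁'.ncard = Y₁.ncard + 1 := Set.ncard_insert_of_notMem hg.2 (Set.toFinite _)
      have hVX' : (VX G Y₁').ncard ≤ (VX G Y₁).ncard + 1 := by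
        rw [hpq, Sym2.mem_iff] at hvg
        have hsub : ∀ w', VX G Y₁' ⊆ insert w' (VX G Y₁) →
            (VX G Y₁').ncard ≤ (VX G Y₁).ncard + 1 :=
          fun w' hs => le_trans (Set.ncard_le_ncard hs (Set.toFinite _)) (Set.ncard_insert_le _ _)
        rcases hvg with rfl | rfl
        · refine hsub q ?_
          rintro u ⟨e', he', hu⟩
          rcases he' with rfl | he'
          · rw [hpq, Sym2.mem_iff] at hu
            rcases hu with rfl | rfl
            · exact Or.inr hvY₁
            · exact Or.inl rfl
          · exact Or.inr ⟨e', he', hu⟩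
        · refine hsub p ?_
          rintro u ⟨e', he', hu⟩
          rcases he' with rfl | he'
          · rw [hpq, Sym2.mem_iff] at hu
            rcases hu with rfl | rfl
            · exact Or.inl rfl
            · exact Or.inr hvY₁
          · exact Or.inr ⟨e', he', hu⟩
      have := ih X Y₁' Y₂ hmeas hX hconn' hY₂ (Set.insert_subset hg.1 hY₁X) hY₂X
        ⟨g, Or.inl rfl⟩ hY₂ne hdisj'
      omega

lemma excess_two {Y₁ Y₂ : Set E} (hX : ConnOn G X) (hY₁ : ConnOn G Y₁) (hY₂ : ConnOn G Y₂)
    (h1X : Y₁ ⊆ X) (h2X : Y₂ ⊆ X) (h1ne : Y₁.Nonempty) (h2ne : Y₂.Nonempty)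
    (hdisj : VX G Y₁ ∩ VX G Y₂ = ∅) :
    Y₁.ncard + Y₂.ncard + 1 + (VX G X).ncard ≤ X.ncard + (VX G Y₁).ncard + (VX G Y₂).ncard :=
  excess_two_aux (X \ Y₁).ncard X Y₁ Y₂ le_rfl hX hY₁ hY₂ h1X h2X h1ne h2ne hdisj

end excess2

/-! ### components -/

def cmp (G : MGraph V E) (A : Set E) (x : E) : Set E :=
  {y | y ∈ A ∧ Relation.ReflTransGen (EAdj G A) x y}

lemma cmp_subset : cmp G A e ⊆ A := fun _ h => h.1

lemma mem_cmp_self (hx : e ∈ A) : e ∈ cmp G A e := ⟨hx, Relation.ReflTransGen.refl⟩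

lemma cmp_closed (hy : f ∈ cmp G A e) (hadj : EAdj G A f g) : g ∈ cmp G A e :=
  ⟨hadj.2.1, hy.2.tail hadj⟩

lemma rtg_in_cmp (hx : e ∈ A) :
    ∀ b, Relation.ReflTransGen (EAdj G A) e b →
      Relation.ReflTransGen (EAdj G (cmp G A e)) e b := by
  intro b hb
  induction hb with
  | refl => exact Relation.ReflTransGen.refl
  | tail h₁ h₂ ih =>
    exact ih.tail ⟨⟨h₂.1, h₁⟩, cmp_closed ⟨h₂.1, h₁⟩ h₂, h₂.2.2⟩

lemma cmp_conn (hx : e ∈ A) : ConnOn G (cmp G A e) := by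
  intro a ha b hb
  have h1 := rtg_in_cmp hx a ha.2
  have h2 := rtg_in_cmp hx b hb.2
  exact (rtg_symm h1).trans h2

lemma cmp_eq_of_mem (hx : e ∈ A) (hy : f ∈ cmp G A e) : cmp G A f = cmp G A e := by
  ext z
  constructor
  · rintro ⟨hz, hr⟩
    exact ⟨hz, hy.2.trans hr⟩
  · rintro ⟨hz, hr⟩
    exact ⟨hz, (rtg_symm hy.2).trans hr⟩

lemma vx_cmp_cases (hx : e ∈ A) (hy : f ∈ A) (hv : v ∈ VX G (cmp G A e) ∩ VX G (cmp G A f)) :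
    cmp G A e = cmp G A f := by
  obtain ⟨⟨p, hp, hvp⟩, ⟨q, hq, hvq⟩⟩ := hv
  have hadj : EAdj G A p q := ⟨hp.1, hq.1, v, hvp, hvq⟩
  have hqe : q ∈ cmp G A e := cmp_closed hp hadj
  rw [← cmp_eq_of_mem hx hqe, cmp_eq_of_mem hy hq]

lemma conn_subset_cmp (hx : e ∈ A) {W : Set E} (hWA : W ⊆ A) (hW : ConnOn G W)
    (w₀ : E) (hw₀ : w₀ ∈ W) (hw₀cmp : w₀ ∈ cmp G A e) : W ⊆ cmp G A e := by
  intro w hw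
  have := hW w₀ hw₀ w hw
  have h2 : Relation.ReflTransGen (EAdj G A) w₀ w :=
    Relation.ReflTransGen.mono (fun _ _ h => ⟨hWA h.1, hWA h.2.1, h.2.2⟩) _ _ this
  exact ⟨hWA hw, hw₀cmp.2.trans h2⟩

/-! ### deleting an edge keeping connectivity -/

lemma conn_del (hX : ConnOn G X)
    (H : ∀ c, c ∈ X \ {g} → ∀ d, d ∈ X \ {g} →
      (∃ v, v ∈ G.ends c ∧ v ∈ G.ends g) → (∃ v, v ∈ G.ends d ∧ v ∈ G.ends g) →
      Relation.ReflTransGen (EAdj G (X \ {g})) c d) :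
    ConnOn G (X \ {g}) := by
  intro a ha b hb
  have claim : ∀ b', Relation.ReflTransGen (EAdj G X) a b' →
      (b' ≠ g → Relation.ReflTransGen (EAdj G (X \ {g})) a b') ∧
      (b' = g → ∃ h, h ∈ X \ {g} ∧ (∃ v, v ∈ G.ends h ∧ v ∈ G.ends g) ∧
        Relation.ReflTransGen (EAdj G (X \ {g})) a h) := by
    intro b' hb'
    induction hb' with
    | refl =>
      exact ⟨fun _ => Relation.ReflTransGen.refl, fun hag => absurd hag ha.2⟩
    | tail h₁ h₂ ih =>
      rename_i c d
      obtain ⟨hcX, hdX, v, hvc, hvd⟩ := h₂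
      by_cases hcg : c = g
      · subst hcg
        obtain ⟨h, hh, hhv, hrtg⟩ := ih.2 rfl
        constructor
        · intro hdg
          have := H h hh d ⟨hdX, hdg⟩ hhv ⟨v, hvd, hvc⟩
          exact hrtg.trans this
        · intro _
          exact ⟨h, hh, hhv, hrtg⟩
      · have hrac := ih.1 hcg
        constructor
        · intro hdg
          exact hrac.tail ⟨⟨hcX, hcg⟩, ⟨hdX, hdg⟩, v, hvc, hvd⟩
        · intro hdg
          exact ⟨c, ⟨hcX, hcg⟩, ⟨v, hvc, hdg ▸ hvd⟩, hrac⟩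
  exact (claim b (hX a ha.1 b hb.1)).1 hb.2

/-! ### handshake -/

section handshake
variable [Fintype V] [Fintype E]

lemma deg_singleton_sum (e : E) : ∑ v : V, deg G {e} v = 2 := by
  classical
  obtain ⟨a, b, hab⟩ := sym2_exists_rep (G.ends e)
  have h1 : ∀ v : V, ({f ∈ ({e} : Set E) | v ∈ G.ends f}).ncard
      = if v ∈ G.ends e then 1 else 0 := by
    intro v
    split_ifs with h
    · rw [show {f ∈ ({e} : Set E) | v ∈ G.ends f} = {e} by
        ext f; simp only [Set.mem_setOf_eq, Set.mem_singleton_iff]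
        constructor
        · rintro ⟨rfl, -⟩; rfl
        · rintro rfl; exact ⟨rfl, h⟩]
      exact Set.ncard_singleton e
    · rw [show {f ∈ ({e} : Set E) | v ∈ G.ends f} = ∅ by
        ext f; simp only [Set.mem_setOf_eq, Set.mem_singleton_iff, Set.mem_empty_iff_false]
        exact ⟨fun hq => by rcases hq with ⟨rfl, hf⟩; exact h hf, False.elim⟩]
      exact Set.ncard_empty E
  have h2 : ∀ v : V, ({f ∈ ({e} : Set E) | G.ends f = s(v, v)}).ncard
      = if G.ends e = s(v, v) then 1 else 0 := by
    intro v
    split_ifs with h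
    · rw [show {f ∈ ({e} : Set E) | G.ends f = s(v, v)} = {e} by
        ext f; simp only [Set.mem_setOf_eq, Set.mem_singleton_iff]
        constructor
        · rintro ⟨rfl, -⟩; rfl
        · rintro rfl; exact ⟨rfl, h⟩]
      exact Set.ncard_singleton e
    · rw [show {f ∈ ({e} : Set E) | G.ends f = s(v, v)} = ∅ by
        ext f; simp only [Set.mem_setOf_eq, Set.mem_singleton_iff, Set.mem_empty_iff_false]
        exact ⟨fun hq => by rcases hq with ⟨rfl, hf⟩; exact h hf, False.elim⟩]
      exact Set.ncard_empty E
  unfold deg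
  rw [Finset.sum_congr rfl (fun v _ => by rw [h1 v, h2 v])]
  rw [Finset.sum_add_distrib, Finset.sum_boole, Finset.sum_boole]
  have c1 : (Finset.univ.filter (fun v : V => v ∈ G.ends e)).card
      = if a = b then 1 else 2 := by
    rw [show Finset.univ.filter (fun v : V => v ∈ G.ends e) = if a = b then {a} else {a, b} by
      split_ifs with h
      · subst h
        ext v; simp [hab, Sym2.mem_iff]
      · ext v; simp [hab, Sym2.mem_iff]]
    split_ifs with h
    · simp
    · exact Finset.card_pair h
  have c2 : (Finset.univ.filter (fun v : V => G.ends e = s(v, v))).card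
      = if a = b then 1 else 0 := by
    rw [show Finset.univ.filter (fun v : V => G.ends e = s(v, v))
        = if a = b then {a} else ∅ by
      split_ifs with h
      · subst h
        ext v
        simp only [Finset.mem_filter, Finset.mem_univ, true_and, Finset.mem_singleton, hab]
        rw [Sym2.eq_iff]
        tauto
      · ext v
        simp only [Finset.mem_filter, Finset.mem_univ, true_and, Finset.notMem_empty,
          iff_false, hab]
        rw [Sym2.eq_iff]
        rintro (⟨rfl, rfl⟩ | ⟨rfl, rfl⟩) <;> exact h rfl]
    split_ifs with h <;> simp
  rw [Nat.cast_id, Nat.cast_id] at *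
  rw [c1, c2]
  split_ifs <;> rfl

lemma handshake_aux : ∀ (n : ℕ) (X : Set E), X.ncard ≤ n → ∑ v : V, deg G X v = 2 * X.ncard := by
  intro n
  induction n with
  | zero =>
    intro X hn
    have hX : X = ∅ := (Set.ncard_eq_zero (Set.toFinite _)).mp (Nat.le_zero.mp hn)
    subst hX
    have : ∀ v : V, deg G (∅ : Set E) v = 0 := fun v => deg_eq_zero (by
      rintro ⟨e, he, -⟩; exact he)
    simp [this]
  | succ n ih =>
    intro X hn
    rcases Set.eq_empty_or_nonempty X with rfl | ⟨a, ha⟩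
    · have : ∀ v : V, deg G (∅ : Set E) v = 0 := fun v => deg_eq_zero (by
        rintro ⟨e, he, -⟩; exact he)
      simp [this]
    have hXeq : X = {a} ∪ (X \ {a}) := by
      rw [Set.singleton_union, Set.insert_diff_singleton, Set.insert_eq_of_mem ha]
    have hdisj : ({a} : Set E) ∩ (X \ {a}) = ∅ := by
      rw [Set.eq_empty_iff_forall_notMem]
      rintro x ⟨rfl, -, hx⟩
      exact hx rfl
    have hcard : (X \ {a}).ncard = X.ncard - 1 := Set.ncard_diff_singleton_of_mem ha
    have hpos : 0 < X.ncard := (Set.ncard_pos (Set.toFinite _)).mpr ⟨a, ha⟩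
    have ihX := ih (X \ {a}) (by omega)
    have : ∀ v : V, deg G X v = deg G {a} v + deg G (X \ {a}) v := by
      intro v
      conv_lhs => rw [hXeq]
      rw [deg_union hdisj]
    rw [Finset.sum_congr rfl (fun v _ => this v), Finset.sum_add_distrib,
      deg_singleton_sum, ihX]
    omega

lemma handshake (X : Set E) : ∑ v : V, deg G X v = 2 * X.ncard :=
  handshake_aux X.ncard X le_rfl

lemma handshake_VX (X : Set E) :
    ∑ v ∈ (Set.toFinite (VX G X)).toFinset, deg G X v = 2 * X.ncard := by
  classical
  rw [← handshake (G := G) X]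
  refine Finset.sum_subset (Finset.subset_univ ((Set.toFinite (VX G X)).toFinset))
    (fun v _ hv => ?_)
  exact deg_eq_zero (fun hmem => hv ((Set.Finite.mem_toFinset _).mpr hmem))

lemma cycle_ncard (hC : IsCycle G C) : C.ncard = (VX G C).ncard := by
  classical
  have h := handshake_VX (G := G) C
  rw [Finset.sum_congr rfl (fun v hv => hC.2.2 v (by
    rwa [Set.Finite.mem_toFinset] at hv))] at h
  rw [Finset.sum_const, smul_eq_mul] at h
  have h2 : (VX G C).ncard = (Set.toFinite (VX G C)).toFinset.card :=
    Set.ncard_eq_toFinset_card _ _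
  omega

end handshake

/-! ### cycle existence -/

section cycex
variable [Fintype V] [Fintype E]

lemma loop_is_cycle (hv : G.ends e = s(v, v)) : IsCycle G {e} := by
  refine ⟨⟨e, rfl⟩, connOn_singleton, ?_⟩
  intro w hw
  have hwv : w = v := by
    obtain ⟨f, rfl, hwf⟩ := hw
    rw [hv, Sym2.mem_iff] at hwf
    tauto
  subst hwv
  unfold deg
  have h1 : {f ∈ ({e} : Set E) | w ∈ G.ends f} = {e} := by
    ext f
    simp only [Set.mem_setOf_eq, Set.mem_singleton_iff]
    exact ⟨fun h => h.1, fun h => ⟨h, by rw [h, hv]; simp⟩⟩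
  have h2 : {f ∈ ({e} : Set E) | G.ends f = s(w, w)} = {e} := by
    ext f
    simp only [Set.mem_setOf_eq, Set.mem_singleton_iff]
    exact ⟨fun h => h.1, fun h => ⟨h, by rw [h, hv]⟩⟩
  rw [h1, h2, Set.ncard_singleton]

lemma pair_is_cycle {a b : V} (hea : G.ends e = s(a, b)) (hab : a ≠ b) (hef : e ≠ f)
    (hfe : G.ends f = G.ends e) : IsCycle G {e, f} := by
  have hfa : G.ends f = s(a, b) := hfe.trans hea
  refine ⟨⟨e, Or.inl rfl⟩, ?_, ?_⟩
  · -- connectivity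
    have hadj : EAdj G {e, f} e f :=
      ⟨Or.inl rfl, Or.inr rfl, a, by rw [hea]; simp, by rw [hfa]; simp⟩
    rintro x (rfl | rfl) y (rfl | rfl)
    · exact Relation.ReflTransGen.refl
    · exact Relation.ReflTransGen.single hadj
    · exact Relation.ReflTransGen.single hadj.symm'
    · exact Relation.ReflTransGen.refl
  · intro w hw
    have hwab : w = a ∨ w = b := by
      obtain ⟨g', hg', hwg⟩ := hw
      rcases hg' with rfl | rfl
      · rw [hea, Sym2.mem_iff] at hwg; exact hwg
      · rw [hfa, Sym2.mem_iff] at hwg; exact hwg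
    have key : ∀ w', (w' = a ∨ w' = b) → deg G {e, f} w' = 2 := by
      intro w' hw'
      have hmem : w' ∈ G.ends e := by
        rw [hea, Sym2.mem_iff]; exact hw'
      have hmem' : w' ∈ G.ends f := by
        rw [hfa, Sym2.mem_iff]; exact hw'
      unfold deg
      have h1 : {g' ∈ ({e, f} : Set E) | w' ∈ G.ends g'} = {e, f} := by
        ext g'
        simp only [Set.mem_setOf_eq]
        refine ⟨fun h => h.1, fun h => ⟨h, ?_⟩⟩
        rcases h with rfl | rfl
        exacts [hmem, hmem']
      have h2 : {g' ∈ ({e, f} : Set E) | G.ends g' = s(w', w')} = ∅ := by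
        ext g'
        simp only [Set.mem_setOf_eq, Set.mem_empty_iff_false, iff_false]
        rintro ⟨hg', hdiag⟩
        have : (G.ends g').IsDiag := by rw [hdiag]; exact Sym2.mk_isDiag_iff.mpr rfl
        have hg'ab : G.ends g' = s(a, b) := by
          rcases hg' with rfl | rfl
          exacts [hea, hfa]
        rw [hg'ab, Sym2.mk_isDiag_iff] at this
        exact hab this
      rw [h1, h2, Set.ncard_empty, Set.ncard_pair hef]
    exact key w hwab

lemma cycle_exists (hdeg : ∀ v ∈ VX G X, 2 ≤ deg G X v) (hne : X.Nonempty) :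
    ∃ C, C ⊆ X ∧ IsCycle G C := by
  classical
  -- case: a loop exists
  by_cases hloop : ∃ e ∈ X, (G.ends e).IsDiag
  · obtain ⟨e, heX, hdiag⟩ := hloop
    obtain ⟨a, b, hab⟩ := sym2_exists_rep (G.ends e)
    have : a = b := by rwa [hab, Sym2.mk_isDiag_iff] at hdiag
    subst this
    exact ⟨{e}, Set.singleton_subset_iff.mpr heX, loop_is_cycle hab⟩
  push_neg at hloop
  -- case: parallel edges exist
  by_cases hpar : ∃ e ∈ X, ∃ f ∈ X, e ≠ f ∧ G.ends e = G.ends f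
  · obtain ⟨e, heX, f, hfX, hef, hfe⟩ := hpar
    obtain ⟨a, b, hab⟩ := sym2_exists_rep (G.ends e)
    have hanb : a ≠ b := by
      intro h
      exact hloop e heX (by rw [hab, Sym2.mk_isDiag_iff]; exact h)
    refine ⟨{e, f}, ?_, pair_is_cycle hab hanb hef hfe.symm⟩
    rintro x (rfl | rfl)
    exacts [heX, hfX]
  push_neg at hpar
  have hinj : ∀ e ∈ X, ∀ f ∈ X, G.ends e = G.ends f → e = f := by
    intro e he f hf h
    by_contra hne'
    exact (hpar e he f hf hne') h
  -- main case: build a walk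
  have step_ex : ∀ e ∈ X, ∀ w ∈ G.ends e, ∃ e', e' ∈ X ∧ e' ≠ e ∧ w ∈ G.ends e' := by
    intro e he w hw
    have hwVX : w ∈ VX G X := ⟨e, he, hw⟩
    have hloops : {f ∈ X | G.ends f = s(w, w)} = ∅ := by
      ext f
      simp only [Set.mem_setOf_eq, Set.mem_empty_iff_false, iff_false]
      rintro ⟨hf, hdiag⟩
      exact hloop f hf (by rw [hdiag]; exact Sym2.mk_isDiag_iff.mpr rfl)
    have h2 : 2 ≤ ({f ∈ X | w ∈ G.ends f}).ncard := by
      have hd := hdeg w hwVX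
      unfold deg at hd
      have hz : ({f ∈ X | G.ends f = s(w, w)}).ncard = 0 := by
        rw [hloops]; exact Set.ncard_empty E
      omega
    obtain ⟨p, hp, q, hq, hpq⟩ :=
      (Set.one_lt_ncard (s := {f ∈ X | w ∈ G.ends f}) (Set.toFinite _)).mp (by omega)
    by_cases hpe : p = e
    · exact ⟨q, hq.1, fun h => hpq (hpe.trans h.symm), hq.2⟩
    · exact ⟨p, hp.1, hpe, hp.2⟩
  choose nxt hnxt1 hnxt2 hnxt3 using step_ex
  obtain ⟨e₀, he₀⟩ := hne
  obtain ⟨w₀, hw₀⟩ := sym2_exists_mem (G.ends e₀)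
  let T := {p : E × V // p.1 ∈ X ∧ p.2 ∈ G.ends p.1}
  let succ : T → T := fun p =>
    ⟨(nxt p.1.1 p.2.1 p.1.2 p.2.2, Sym2.Mem.other' (hnxt3 p.1.1 p.2.1 p.1.2 p.2.2)),
      hnxt1 p.1.1 p.2.1 p.1.2 p.2.2, Sym2.other_mem' _⟩
  let F : ℕ → T := fun n => Nat.rec (⟨(e₀, w₀), he₀, hw₀⟩ : T) (fun _ p => succ p) n
  let ε : ℕ → E := fun n => (F n).1.1
  let vs : ℕ → V := fun n => Nat.casesOn n (Sym2.Mem.other' hw₀) (fun k => (F k).1.2)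
  have hFsucc : ∀ n, F (n + 1) = succ (F n) := fun n => rfl
  have hεX : ∀ n, ε n ∈ X := fun n => (F n).2.1
  have hI2 : ∀ n, G.ends (ε n) = s(vs n, vs (n + 1)) := by
    intro n
    cases n with
    | zero =>
      show G.ends e₀ = s(Sym2.Mem.other' hw₀, w₀)
      rw [Sym2.eq_swap]
      exact (Sym2.other_spec' hw₀).symm
    | succ k =>
      show G.ends (succ (F k)).1.1 = s((F k).1.2, (F (k + 1)).1.2)
      rw [hFsucc k]
      show G.ends (nxt _ _ _ _) = s((F k).1.2, Sym2.Mem.other' (hnxt3 _ _ _ _))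
      exact (Sym2.other_spec' (hnxt3 _ _ _ _)).symm
  have hI3 : ∀ n, ε (n + 1) ≠ ε n := fun n => hnxt2 _ _ _ _
  have hD1 : ∀ n, vs n ≠ vs (n + 1) := by
    intro n h
    exact hloop (ε n) (hεX n) (by rw [hI2 n, Sym2.mk_isDiag_iff]; exact h)
  have hD2 : ∀ n, vs n ≠ vs (n + 2) := by
    intro n h
    apply hI3 n
    apply hinj _ (hεX (n + 1)) _ (hεX n)
    rw [hI2 n, hI2 (n + 1), ← h, Sym2.eq_swap]
  -- pigeonhole
  obtain ⟨i', j', hij', heq'⟩ := Finite.exists_ne_map_eq_of_infinite vs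
  have hPex : ∃ j, ∃ i, i < j ∧ vs i = vs j := by
    rcases Nat.lt_or_ge i' j' with h | h
    · exact ⟨j', i', h, heq'⟩
    · have : j' < i' := lt_of_le_of_ne h (Ne.symm hij')
      exact ⟨i', j', this, heq'.symm⟩
  haveI : DecidablePred fun j => ∃ i, i < j ∧ vs i = vs j := Classical.decPred _
  set j₀ := Nat.find hPex with hj₀def
  obtain ⟨i₀, hi₀lt, hveq⟩ := Nat.find_spec hPex
  have hvinj : ∀ a b, a < b → b < j₀ → vs a ≠ vs b := by
    intro a b hab hb h
    exact Nat.find_min hPex hb ⟨a, hab, h⟩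
  have hvinj' : ∀ a b, i₀ ≤ a → a < j₀ → i₀ ≤ b → b < j₀ → vs a = vs b → a = b := by
    intro a b _ ha _ hb h
    rcases Nat.lt_trichotomy a b with hlt | heqq | hgt
    · exact absurd h (hvinj a b hlt hb)
    · exact heqq
    · exact absurd h.symm (hvinj b a hgt ha)
  have hj₀3 : i₀ + 3 ≤ j₀ := by
    have h1 : j₀ ≠ i₀ + 1 := by
      intro h
      exact hD1 i₀ (by rw [← h]; exact hveq)
    have h2 : j₀ ≠ i₀ + 2 := by
      intro h
      apply hD2 i₀
      rw [show i₀ + 2 = i₀ + 1 + 1 from rfl, ← h]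
      exact hveq
    omega
  set C : Set E := ε '' (Set.Ico i₀ j₀) with hCdef
  have hCsub : C ⊆ X := by
    rintro _ ⟨k, _, rfl⟩
    exact hεX k
  have heinj : ∀ k l, i₀ ≤ k → k < j₀ → i₀ ≤ l → l < j₀ → ε k = ε l → k = l := by
    have key : ∀ k l, i₀ ≤ k → k < l → l < j₀ → ε k ≠ ε l := by
      intro k l hk hkl hl h
      have hends : s(vs k, vs (k + 1)) = s(vs l, vs (l + 1)) := by
        rw [← hI2, ← hI2, h]
      rw [Sym2.eq_iff] at hends
      rcases hends with ⟨h1, _⟩ | ⟨h1, h2⟩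
      · exact hvinj k l hkl hl h1
      · have hl1 : l = k + 1 := by
          rcases Nat.lt_trichotomy (k + 1) l with hlt | heqq | hgt
          · exact absurd h2 (hvinj (k + 1) l hlt hl)
          · exact heqq.symm
          · omega
        subst hl1
        by_cases hk2 : k + 1 + 1 < j₀
        · exact hvinj k (k + 1 + 1) (by omega) hk2 h1
        · have hkj : k + 1 + 1 = j₀ := by omega
          have hvk : vs k = vs i₀ := by rw [h1, hkj, ← hveq]
          have hki : k = i₀ := by
            rcases Nat.lt_or_ge i₀ k with hgt | hge
            · exact absurd hvk.symm (hvinj i₀ k hgt (by omega))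
            · omega
          omega
    intro k l hk hk' hl hl' h
    rcases Nat.lt_trichotomy k l with hlt | heqq | hgt
    · exact absurd h (key k l hk hlt hl')
    · exact heqq
    · exact absurd h.symm (key l k hl hgt hk')
  have hVXC : ∀ w, w ∈ VX G C → ∃ m, i₀ ≤ m ∧ m < j₀ ∧ w = vs m := by
    rintro w ⟨e', ⟨l, hl, rfl⟩, hw⟩
    obtain ⟨hl1, hl2⟩ := hl
    rw [hI2 l, Sym2.mem_iff] at hw
    rcases hw with rfl | rfl
    · exact ⟨l, hl1, hl2, rfl⟩
    · by_cases h : l + 1 < j₀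
      · exact ⟨l + 1, by omega, h, rfl⟩
      · have hlj : l + 1 = j₀ := by omega
        exact ⟨i₀, le_rfl, by omega, by rw [hlj, ← hveq]⟩
  have hloopsC : ∀ w, {f ∈ C | G.ends f = s(w, w)} = ∅ := by
    intro w
    ext f
    simp only [Set.mem_setOf_eq, Set.mem_empty_iff_false, iff_false]
    rintro ⟨⟨l, hl, rfl⟩, hdiag⟩
    rw [hI2 l, Sym2.eq_iff] at hdiag
    rcases hdiag with ⟨ha, hb⟩ | ⟨ha, hb⟩ <;> exact hD1 l (ha.trans hb.symm)
  have main : ∀ m p, i₀ ≤ m → m < j₀ → i₀ ≤ p → p < j₀ → p ≠ m →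
      (p + 1 = m ∨ (m = i₀ ∧ p + 1 = j₀)) →
      {f ∈ C | vs m ∈ G.ends f} = {ε m, ε p} := by
    intro m p hm hm' hp hp' hpm hpin
    ext f
    simp only [Set.mem_setOf_eq, Set.mem_insert_iff, Set.mem_singleton_iff]
    constructor
    · rintro ⟨⟨l, hl, rfl⟩, hwf⟩
      obtain ⟨hl1, hl2⟩ := hl
      rw [hI2 l, Sym2.mem_iff] at hwf
      rcases hwf with h1 | h1
      · have : m = l := hvinj' m l hm hm' hl1 hl2 h1
        subst this
        exact Or.inl rfl
      · by_cases hlj : l + 1 < j₀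
        · have hlm : l + 1 = m := hvinj' (l + 1) m (by omega) hlj hm hm' h1.symm
          rcases hpin with hpin | ⟨hmi, _⟩
          · have : p = l := by omega
            subst this
            exact Or.inr rfl
          · omega
        · have hlj' : l + 1 = j₀ := by omega
          have hmi : m = i₀ := by
            refine hvinj' m i₀ hm hm' le_rfl (by omega) ?_
            rw [h1, hlj', ← hveq]
          rcases hpin with hpin | ⟨_, hpj⟩
          · omega
          · have : p = l := by omega
            subst this
            exact Or.inr rfl
    · rintro (rfl | rfl)
      · refine ⟨⟨m, ⟨hm, hm'⟩, rfl⟩, ?_⟩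
        rw [hI2 m]
        simp
      · refine ⟨⟨p, ⟨hp, hp'⟩, rfl⟩, ?_⟩
        rw [hI2 p, Sym2.mem_iff]
        right
        rcases hpin with hpin | ⟨hmi, hpj⟩
        · rw [hpin]
        · rw [hpj, ← hveq, hmi]
  have hdegC : ∀ m, i₀ ≤ m → m < j₀ → deg G C (vs m) = 2 := by
    intro m hm hm'
    obtain ⟨p, hp, hp', hpm, hpin⟩ :
        ∃ p, i₀ ≤ p ∧ p < j₀ ∧ p ≠ m ∧ (p + 1 = m ∨ (m = i₀ ∧ p + 1 = j₀)) := by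
      by_cases h : m = i₀
      · exact ⟨j₀ - 1, by omega, by omega, by omega, Or.inr ⟨h, by omega⟩⟩
      · exact ⟨m - 1, by omega, by omega, by omega, Or.inl (by omega)⟩
    have hset := main m p hm hm' hp hp' hpm hpin
    have hne' : ε m ≠ ε p := fun h => hpm (heinj m p hm hm' hp hp' h).symm
    unfold deg
    rw [hset]
    have hz : ({f ∈ C | G.ends f = s(vs m, vs m)}).ncard = 0 := by
      rw [hloopsC (vs m)]; exact Set.ncard_empty E
    rw [hz, Set.ncard_pair hne']
  have hconn : ConnOn G C := by
    have aux : ∀ d, i₀ ≤ d → d < j₀ → Relation.ReflTransGen (EAdj G C) (ε i₀) (ε d) := by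
      intro d
      induction d with
      | zero =>
        intro h1 _
        have : i₀ = 0 := Nat.le_zero.mp h1
        rw [this]
      | succ k ih =>
        intro h1 h2
        by_cases hik : i₀ = k + 1
        · rw [hik]
        · have h1k : i₀ ≤ k := by omega
          have h2k : k < j₀ := by omega
          refine (ih h1k h2k).tail ?_
          refine ⟨⟨k, ⟨h1k, h2k⟩, rfl⟩, ⟨k + 1, ⟨by omega, h2⟩, rfl⟩, vs (k + 1), ?_, ?_⟩
          · rw [hI2 k]; simp
          · rw [hI2 (k + 1)]; simp
    rintro a ⟨k, ⟨hk1, hk2⟩, rfl⟩ b ⟨l, ⟨hl1, hl2⟩, rfl⟩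
    exact (rtg_symm (aux k hk1 hk2)).trans (aux l hl1 hl2)
  refine ⟨C, hCsub, ⟨ε i₀, ⟨i₀, ⟨le_rfl, by omega⟩, rfl⟩⟩, hconn, ?_⟩
  intro w hw
  obtain ⟨m, hm1, hm2, rfl⟩ := hVXC w hw
  exact hdegC m hm1 hm2

end cycex

/-! ### forest bound and cycle facts -/

section forest
variable [Fintype V] [Fintype E]

lemma no_loop_of_acyclic (hac : Acyclic G X) (he : e ∈ X) : ¬ (G.ends e).IsDiag := by
  intro hd
  obtain ⟨a, b, hab⟩ := sym2_exists_rep (G.ends e)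
  have : a = b := by rwa [hab, Sym2.mk_isDiag_iff] at hd
  subst this
  exact hac {e} (Set.singleton_subset_iff.mpr he) (loop_is_cycle hab)

lemma acyclic_card_aux : ∀ (n : ℕ) (X : Set E), X.ncard ≤ n → Acyclic G X → X.Nonempty →
    X.ncard + 1 ≤ (VX G X).ncard := by
  classical
  intro n
  induction n with
  | zero =>
    intro X hn _ hne
    exact absurd ((Set.ncard_pos (Set.toFinite _)).mpr hne) (by omega)
  | succ n ih =>
    intro X hn hac hne
    obtain ⟨v, hvVX, hdeg1⟩ : ∃ v ∈ VX G X, deg G X v = 1 := by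
      by_contra h
      push_neg at h
      have hdeg : ∀ v ∈ VX G X, 2 ≤ deg G X v := by
        intro v hv
        have h1 := one_le_deg hv
        have h2 := h v hv
        omega
      obtain ⟨C, hCX, hC⟩ := cycle_exists hdeg hne
      exact hac C hCX hC
    have hL0 : ({f ∈ X | G.ends f = s(v, v)}).ncard = 0 := by
      rw [(Set.ncard_eq_zero (Set.toFinite _))]
      ext f
      simp only [Set.mem_setOf_eq, Set.mem_empty_iff_false, iff_false]
      rintro ⟨hf, hd⟩
      exact no_loop_of_acyclic hac hf (by rw [hd]; exact Sym2.mk_isDiag_iff.mpr rfl)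
    have hI1 : ({f ∈ X | v ∈ G.ends f}).ncard = 1 := by
      unfold deg at hdeg1
      omega
    obtain ⟨e, he⟩ := Set.ncard_eq_one.mp hI1
    have heX : e ∈ X ∧ v ∈ G.ends e := by
      have : e ∈ {f ∈ X | v ∈ G.ends f} := by rw [he]; rfl
      exact this
    have hunique : ∀ f ∈ X, v ∈ G.ends f → f = e := by
      intro f hf hvf
      have : f ∈ {f ∈ X | v ∈ G.ends f} := ⟨hf, hvf⟩
      rwa [he] at this
    set u := Sym2.Mem.other' heX.2 with hu
    have huv : u ≠ v := by
      intro h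
      refine no_loop_of_acyclic hac heX.1 ?_
      rw [← Sym2.other_spec' heX.2, ← hu, h]
      exact Sym2.mk_isDiag_iff.mpr rfl
    have hends : G.ends e = s(v, u) := (Sym2.other_spec' heX.2).symm
    have hvX' : v ∉ VX G (X \ {e}) := by
      rintro ⟨f, ⟨hf, hfe⟩, hvf⟩
      exact hfe (hunique f hf hvf)
    rcases Set.eq_empty_or_nonempty (X \ {e}) with hX' | hX'
    · have hXe : X = {e} := by
        apply Set.Subset.antisymm
        · intro x hx
          by_contra hxe
          exact Set.eq_empty_iff_forall_notMem.mp hX' x ⟨hx, hxe⟩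
        · exact Set.singleton_subset_iff.mpr heX.1
      rw [hXe, Set.ncard_singleton, VX_singleton hends, Set.ncard_pair (Ne.symm huv)]
    · have hacX' : Acyclic G (X \ {e}) := fun C hC => hac C (hC.trans diff_subset)
      have hcard : (X \ {e}).ncard + 1 = X.ncard := by
        have := Set.ncard_diff_singleton_of_mem heX.1
        have hpos : 0 < X.ncard := (Set.ncard_pos (Set.toFinite _)).mpr hne
        omega
      have hIH := ih (X \ {e}) (by omega) hacX' hX'
      have hsub : VX G (X \ {e}) ⊆ (VX G X) \ {v} := by
        intro x hx
        exact ⟨VX_mono diff_subset hx, fun h => hvX' (h ▸ hx)⟩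
      have h1 : (VX G (X \ {e})).ncard ≤ ((VX G X) \ {v}).ncard :=
        Set.ncard_le_ncard hsub (Set.toFinite _)
      have h2 : ((VX G X) \ {v}).ncard + 1 = (VX G X).ncard := by
        have := Set.ncard_diff_singleton_of_mem hvVX
        have hpos : 0 < (VX G X).ncard := (Set.ncard_pos (Set.toFinite _)).mpr ⟨v, hvVX⟩
        omega
      omega

lemma acyclic_card (hac : Acyclic G X) (hne : X.Nonempty) :
    X.ncard + 1 ≤ (VX G X).ncard :=
  acyclic_card_aux X.ncard X le_rfl hac hne

lemma cycle_incomp {C' : Set E} (hC : IsCycle G C) (hC' : IsCycle G C') (hsub : C' ⊆ C) :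
    C' = C := by
  refine Set.Subset.antisymm hsub ?_
  obtain ⟨c₀, hc₀⟩ := hC'.1
  have key : ∀ x, Relation.ReflTransGen (EAdj G C) c₀ x → x ∈ C' := by
    intro x hx
    induction hx with
    | refl => exact hc₀
    | tail h₁ h₂ ih =>
      rename_i b c
      obtain ⟨hbC, hcC, v, hvb, hvc⟩ := h₂
      have hvC' : v ∈ VX G C' := ⟨b, ih, hvb⟩
      have hvC : v ∈ VX G C := ⟨b, hsub ih, hvb⟩
      have hsubS : {f ∈ C' | v ∈ G.ends f} ⊆ {f ∈ C | v ∈ G.ends f} :=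
        fun f hf => ⟨hsub hf.1, hf.2⟩
      have hsubL : {f ∈ C' | G.ends f = s(v, v)} ⊆ {f ∈ C | G.ends f = s(v, v)} :=
        fun f hf => ⟨hsub hf.1, hf.2⟩
      have hd' := hC'.2.2 v hvC'
      have hd := hC.2.2 v hvC
      unfold deg at hd' hd
      have hle1 := Set.ncard_le_ncard hsubS (Set.toFinite _)
      have hle2 := Set.ncard_le_ncard hsubL (Set.toFinite _)
      have hSeq : {f ∈ C' | v ∈ G.ends f} = {f ∈ C | v ∈ G.ends f} :=
        Set.eq_of_subset_of_ncard_le hsubS (by omega) (Set.toFinite _)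
      have : c ∈ {f ∈ C' | v ∈ G.ends f} := by
        rw [hSeq]; exact ⟨hcC, hvc⟩
      exact this.1
  intro x hx
  exact key x (hC.2.1 c₀ (hsub hc₀) x hx)

lemma two_cycles_of_card (hconn : ConnOn G X) (hcard : (VX G X).ncard + 1 ≤ X.ncard) :
    TwoCycles G X := by
  have hne : X.Nonempty := by
    rcases Set.eq_empty_or_nonempty X with rfl | h
    · simp at hcard
    · exact h
  have hnVX : 1 ≤ (VX G X).ncard :=
    (Set.ncard_pos (Set.toFinite _)).mpr (VX_nonempty hne)
  obtain ⟨C₁, hC₁X, hC₁⟩ : ∃ C, C ⊆ X ∧ IsCycle G C := by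
    by_contra h
    push_neg at h
    have : Acyclic G X := fun C hC hCc => h C hC hCc
    have := acyclic_card this hne
    omega
  obtain ⟨g, hg⟩ := hC₁.1
  have hX'ne : (X \ {g}).Nonempty := by
    have h1 : (X \ {g}).ncard + 1 = X.ncard := by
      have := Set.ncard_diff_singleton_of_mem (hC₁X hg)
      have hpos : 0 < X.ncard := (Set.ncard_pos (Set.toFinite _)).mpr hne
      omega
    apply Set.nonempty_of_ncard_ne_zero
    omega
  obtain ⟨C₂, hC₂X, hC₂⟩ : ∃ C, C ⊆ X \ {g} ∧ IsCycle G C := by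
    by_contra h
    push_neg at h
    have hacy : Acyclic G (X \ {g}) := fun C hC hCc => h C hC hCc
    have := acyclic_card hacy hX'ne
    have h1 : (X \ {g}).ncard + 1 = X.ncard := by
      have := Set.ncard_diff_singleton_of_mem (hC₁X hg)
      have hpos : 0 < X.ncard := (Set.ncard_pos (Set.toFinite _)).mpr hne
      omega
    have h2 : (VX G (X \ {g})).ncard ≤ (VX G X).ncard :=
      Set.ncard_le_ncard (VX_mono diff_subset) (Set.toFinite _)
    omega
  refine ⟨C₁, C₂, hC₁X, hC₂X.trans diff_subset, hC₁, hC₂, ?_⟩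
  intro h
  exact (hC₂X (h ▸ hg)).2 rfl

lemma card_of_two_cycles (hconn : ConnOn G X) (h2 : TwoCycles G X) :
    (VX G X).ncard + 1 ≤ X.ncard := by
  obtain ⟨C₁, C₂, h1X, h2X, hC₁, hC₂, hne⟩ := h2
  have hm1 : C₁.ncard = (VX G C₁).ncard := cycle_ncard hC₁
  have hm2 : C₂.ncard = (VX G C₂).ncard := cycle_ncard hC₂
  by_cases hdisj : VX G C₁ ∩ VX G C₂ = ∅
  · have := excess_two hconn hC₁.2.1 hC₂.2.1 h1X h2X hC₁.1 hC₂.1 hdisj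
    omega
  · obtain ⟨v, hv1, hv2⟩ := Set.nonempty_iff_ne_empty.mpr hdisj
    set U := C₁ ∪ C₂ with hU
    have hUconn : ConnOn G U := connOn_union hC₁.2.1 hC₂.2.1 hv1 hv2
    have hUX : U ⊆ X := Set.union_subset h1X h2X
    have hUne : U.Nonempty := hC₁.1.mono subset_union_left
    have hexc := excess hconn hUconn hUX hUne
    have hEu : U.ncard + (C₁ ∩ C₂).ncard = C₁.ncard + C₂.ncard :=
      Set.ncard_union_add_ncard_inter _ _ (Set.toFinite _) (Set.toFinite _)
    have hVu : VX G U = VX G C₁ ∪ VX G C₂ := VX_union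
    have hVeq : (VX G U).ncard + (VX G C₁ ∩ VX G C₂).ncard
        = (VX G C₁).ncard + (VX G C₂).ncard := by
      rw [hVu]
      exact Set.ncard_union_add_ncard_inter _ _ (Set.toFinite _) (Set.toFinite _)
    have hVpos : 1 ≤ (VX G C₁ ∩ VX G C₂).ncard :=
      (Set.ncard_pos (Set.toFinite _)).mpr ⟨v, hv1, hv2⟩
    have hkey : (VX G U).ncard + 1 ≤ U.ncard := by
      rcases Set.eq_empty_or_nonempty (C₁ ∩ C₂) with hE | hEne
      · rw [hE, Set.ncard_empty] at hEu
        omega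
      · have hacy : Acyclic G (C₁ ∩ C₂) := by
          intro D hD hDc
          have hD1 : D = C₁ := cycle_incomp hC₁ hDc (hD.trans Set.inter_subset_left)
          have : C₁ ⊆ C₂ := hD1 ▸ (hD.trans Set.inter_subset_right)
          exact hne (cycle_incomp hC₂ hC₁ this)
        have hfb := acyclic_card hacy hEne
        have hVXsub : VX G (C₁ ∩ C₂) ⊆ VX G C₁ ∩ VX G C₂ :=
          fun x hx => ⟨VX_mono Set.inter_subset_left hx, VX_mono Set.inter_subset_right hx⟩
        have := Set.ncard_le_ncard hVXsub (Set.toFinite _)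
        omega
    omega

end forest

/-! ### deleting a cycle edge -/

section cycdel
variable [Fintype V] [Fintype E]

lemma singleton_cycle_diag (hC : IsCycle G {g}) : (G.ends g).IsDiag := by
  obtain ⟨a, b, hab⟩ := sym2_exists_rep (G.ends g)
  rw [hab, Sym2.mk_isDiag_iff]
  by_contra hne
  have haVX : a ∈ VX G {g} := ⟨g, rfl, by rw [hab]; simp⟩
  have hd := hC.2.2 a haVX
  unfold deg at hd
  have h1 : {f ∈ ({g} : Set E) | a ∈ G.ends f} = {g} := by
    ext f
    simp only [Set.mem_setOf_eq, Set.mem_singleton_iff]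
    exact ⟨fun h => h.1, fun h => ⟨h, by rw [h, hab]; simp⟩⟩
  have h2 : {f ∈ ({g} : Set E) | G.ends f = s(a, a)} = ∅ := by
    ext f
    simp only [Set.mem_setOf_eq, Set.mem_singleton_iff, Set.mem_empty_iff_false, iff_false]
    rintro ⟨rfl, hf⟩
    rw [hab, Sym2.eq_iff] at hf
    rcases hf with ⟨-, h⟩ | ⟨-, h⟩ <;> exact hne h.symm
  rw [h1, h2, Set.ncard_singleton, Set.ncard_empty] at hd
  omega

lemma cycle_del_core (hC : IsCycle G C) (hg : g ∈ C) (hne : C ≠ {g}) :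
    ConnOn G (C \ {g}) ∧ ∀ u ∈ G.ends g, u ∈ VX G (C \ {g}) := by
  classical
  have hnoloopC : ∀ f ∈ C, ¬(G.ends f).IsDiag := by
    intro f hf hd
    obtain ⟨a, b, hab⟩ := sym2_exists_rep (G.ends f)
    have : a = b := by rwa [hab, Sym2.mk_isDiag_iff] at hd
    subst this
    have : {f} = C := cycle_incomp hC (loop_is_cycle hab) (Set.singleton_subset_iff.mpr hf)
    have hgf : g = f := by
      have : g ∈ ({f} : Set E) := this ▸ hg
      exact this
    exact hne (by rw [hgf, this])
  obtain ⟨u, w, hguw⟩ := sym2_exists_rep (G.ends g)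
  have hunw : u ≠ w := by
    intro h
    exact hnoloopC g hg (by rw [hguw, h]; exact Sym2.mk_isDiag_iff.mpr rfl)
  have hother : ∀ x, x ∈ G.ends g → ∃ h, h ∈ C \ {g} ∧ x ∈ G.ends h := by
    intro x hx
    have hxVX : x ∈ VX G C := ⟨g, hg, hx⟩
    have hd := hC.2.2 x hxVX
    unfold deg at hd
    have hL : ({f ∈ C | G.ends f = s(x, x)}).ncard = 0 := by
      rw [Set.ncard_eq_zero (Set.toFinite _)]
      ext f
      simp only [Set.mem_setOf_eq, Set.mem_empty_iff_false, iff_false]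
      rintro ⟨hf, hdg⟩
      exact hnoloopC f hf (by rw [hdg]; exact Sym2.mk_isDiag_iff.mpr rfl)
    have hI : 1 < ({f ∈ C | x ∈ G.ends f}).ncard := by omega
    obtain ⟨p, hp, q, hq, hpq⟩ :=
      (Set.one_lt_ncard (s := {f ∈ C | x ∈ G.ends f}) (Set.toFinite _)).mp hI
    by_cases hpg : p = g
    · exact ⟨q, ⟨hq.1, fun h => hpq (hpg.trans h.symm)⟩, hq.2⟩
    · exact ⟨p, ⟨hp.1, hpg⟩, hp.2⟩
  have hVXpart : ∀ x ∈ G.ends g, x ∈ VX G (C \ {g}) := by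
    intro x hx
    obtain ⟨h, hh, hxh⟩ := hother x hx
    exact ⟨h, hh, hxh⟩
  set D := C \ {g} with hD
  have hCD : D ∪ {g} = C := Set.diff_union_of_subset (Set.singleton_subset_iff.mpr hg)
  have hdegD : ∀ x, x ∈ VX G D → deg G D x + (if x ∈ G.ends g then 1 else 0) = 2 := by
    intro x hx
    have hxC : x ∈ VX G C := VX_mono diff_subset hx
    have h2 := hC.2.2 x hxC
    have hdisj : D ∩ {g} = ∅ := by
      rw [Set.eq_empty_iff_forall_notMem]
      rintro f ⟨hf, rfl⟩
      exact hf.2 rfl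
    have hsplit : deg G C x = deg G D x + deg G {g} x := by
      conv_lhs => rw [← hCD]
      exact deg_union hdisj
    have hdg : deg G {g} x = if x ∈ G.ends g then 1 else 0 := by
      unfold deg
      have hL : {f ∈ ({g} : Set E) | G.ends f = s(x, x)} = ∅ := by
        ext f
        simp only [Set.mem_setOf_eq, Set.mem_singleton_iff, Set.mem_empty_iff_false, iff_false]
        rintro ⟨rfl, hf⟩
        exact hnoloopC f hg (by rw [hf]; exact Sym2.mk_isDiag_iff.mpr rfl)
      split_ifs with h
      · rw [hL, show {f ∈ ({g} : Set E) | x ∈ G.ends f} = {g} by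
          ext f
          simp only [Set.mem_setOf_eq, Set.mem_singleton_iff]
          exact ⟨fun hh => hh.1, fun hh => ⟨hh, by rw [hh]; exact h⟩⟩]
        simp
      · rw [hL, show {f ∈ ({g} : Set E) | x ∈ G.ends f} = ∅ by
          ext f
          simp only [Set.mem_setOf_eq, Set.mem_singleton_iff, Set.mem_empty_iff_false, iff_false]
          rintro ⟨rfl, hf⟩
          exact h hf]
        simp
    omega
  have hpar : ∀ (K : Set E), K ⊆ D → (∀ x ∈ VX G K, deg G K x = deg G D x) →
      ∀ p q, G.ends g = s(p, q) → p ∈ VX G K → q ∉ VX G K → False := by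
    intro K hKsub hdegK p q hpq hp hq
    have hhs := handshake_VX (G := G) (X := K)
    have hval : ∀ x ∈ VX G K, deg G K x = if x = p then 1 else 2 := by
      intro x hx
      have h1 := hdegD x (VX_mono hKsub hx)
      have hdk := hdegK x hx
      by_cases hxp : x = p
      · subst hxp
        have : x ∈ G.ends g := by rw [hpq]; simp
        rw [if_pos rfl]
        rw [if_pos this] at h1
        omega
      · rw [if_neg hxp]
        have hxg : x ∉ G.ends g := by
          rw [hpq, Sym2.mem_iff]
          rintro (rfl | rfl)
          · exact hxp rfl
          · exact hq hx
        rw [if_neg hxg] at h1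
        omega
    set T := (Set.toFinite (VX G K)).toFinset with hT
    have hpT : p ∈ T := (Set.Finite.mem_toFinset _).mpr hp
    have hB : ∑ x ∈ T, deg G K x = ∑ x ∈ T, (if x = p then 1 else 2) :=
      Finset.sum_congr rfl (fun x hx => hval x ((Set.Finite.mem_toFinset _).mp hx))
    have hptw : ∀ x ∈ T, (if x = p then 1 else 2) + (if x = p then 1 else 0) = 2 := by
      intro x _
      split_ifs <;> rfl
    have hsum2 : ∑ x ∈ T, ((if x = p then 1 else 2) + (if x = p then 1 else 0)) = 2 * T.card := by
      rw [Finset.sum_congr rfl hptw, Finset.sum_const, smul_eq_mul]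
      ring
    have hsum10 : ∑ x ∈ T, (if x = p then 1 else 0) = 1 := by
      rw [Finset.sum_ite_eq' T p (fun _ => 1), if_pos hpT]
    rw [Finset.sum_add_distrib, hsum10] at hsum2
    have hTcard : T.card = (VX G K).ncard := (Set.ncard_eq_toFinset_card _ _).symm
    omega
  have hcompboth : ∀ c, c ∈ D → u ∈ VX G (cmp G D c) ∧ w ∈ VX G (cmp G D c) := by
    intro c hc
    set K := cmp G D c with hK
    have hKsub : K ⊆ D := cmp_subset
    have hdegK : ∀ x ∈ VX G K, deg G K x = deg G D x := by
      intro x hx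
      obtain ⟨k₀, hk₀, hxk₀⟩ := hx
      have hInc : {f ∈ K | x ∈ G.ends f} = {f ∈ D | x ∈ G.ends f} := by
        ext f
        refine ⟨fun hf => ⟨hKsub hf.1, hf.2⟩, fun hf => ⟨?_, hf.2⟩⟩
        exact cmp_closed hk₀ ⟨hKsub hk₀, hf.1, x, hxk₀, hf.2⟩
      have hLp : {f ∈ K | G.ends f = s(x, x)} = {f ∈ D | G.ends f = s(x, x)} := by
        ext f
        refine ⟨fun hf => ⟨hKsub hf.1, hf.2⟩, fun hf => ⟨?_, hf.2⟩⟩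
        exact cmp_closed hk₀ ⟨hKsub hk₀, hf.1, x, hxk₀, by rw [hf.2]; simp⟩
      unfold deg
      rw [hInc, hLp]
    by_cases hu : u ∈ VX G K <;> by_cases hw : w ∈ VX G K
    · exact ⟨hu, hw⟩
    · exact absurd (hpar K hKsub hdegK u w hguw hu hw) not_false
    · exact absurd (hpar K hKsub hdegK w u (hguw.trans Sym2.eq_swap) hw hu) not_false
    · exfalso
      have hdeg2 : ∀ x ∈ VX G K, 2 ≤ deg G K x := by
        intro x hx
        have h1 := hdegD x (VX_mono hKsub hx)
        have hxg : x ∉ G.ends g := by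
          rw [hguw, Sym2.mem_iff]
          rintro (rfl | rfl)
          · exact hu hx
          · exact hw hx
        rw [if_neg hxg] at h1
        rw [hdegK x hx]
        omega
      obtain ⟨C'', hC''K, hC''⟩ := cycle_exists hdeg2 ⟨c, mem_cmp_self hc⟩
      have hCC : C'' = C :=
        cycle_incomp hC hC'' ((hC''K.trans hKsub).trans diff_subset)
      have hgC'' : g ∈ C'' := hCC ▸ hg
      exact ((hC''K.trans hKsub) hgC'').2 rfl
  refine ⟨?_, hVXpart⟩
  intro a ha b hb
  have h1 := hcompboth a ha
  have h2 := hcompboth b hb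
  have heqc : cmp G D a = cmp G D b := vx_cmp_cases ha hb ⟨h1.1, h2.1⟩
  have hbmem : b ∈ cmp G D a := heqc ▸ mem_cmp_self hb
  exact hbmem.2

lemma conn_del_cycle (hX : ConnOn G X) (hC : IsCycle G C) (hCX : C ⊆ X) (hg : g ∈ C) :
    ConnOn G (X \ {g}) := by
  apply conn_del hX
  rintro c hc d hd ⟨vc, hvc, hvcg⟩ ⟨vd, hvd, hvdg⟩
  by_cases hCg : C = {g}
  · have hdiag := singleton_cycle_diag (hCg ▸ hC)
    obtain ⟨a, b, hab⟩ := sym2_exists_rep (G.ends g)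
    have hba : a = b := by rwa [hab, Sym2.mk_isDiag_iff] at hdiag
    subst hba
    have hvca : vc = a := by
      rw [hab, Sym2.mem_iff] at hvcg
      tauto
    have hvda : vd = a := by
      rw [hab, Sym2.mem_iff] at hvdg
      tauto
    exact Relation.ReflTransGen.single ⟨hc, hd, a, hvca ▸ hvc, hvda ▸ hvd⟩
  · obtain ⟨hconnD, hVXD⟩ := cycle_del_core hC hg hCg
    obtain ⟨ec, hec, hvcec⟩ := hVXD vc hvcg
    obtain ⟨ed, hed, hvded⟩ := hVXD vd hvdg
    have hsubXD : C \ {g} ⊆ X \ {g} := fun x hx => ⟨hCX hx.1, hx.2⟩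
    have hadj1 : EAdj G (X \ {g}) c ec := ⟨hc, hsubXD hec, vc, hvc, hvcec⟩
    have hadj2 : EAdj G (X \ {g}) ed d := ⟨hsubXD hed, hd, vd, hvded, hvd⟩
    exact ((Relation.ReflTransGen.single hadj1).trans
      (rtg_mono hsubXD (hconnD ec hec ed hed))).tail hadj2

lemma spanning_unicyclic (hconn : ConnOn G K) (hne : K.Nonempty) (hnac : ¬ Acyclic G K) :
    ∃ Z, Z ⊆ K ∧ ConnOn G Z ∧ VX G Z = VX G K ∧ Z.ncard = (VX G Z).ncard := by
  obtain ⟨Z, hZK, ⟨hZconn, hZVX, hZnac⟩, hZmin⟩ :=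
    exists_minimal_subset (P := fun Z => ConnOn G Z ∧ VX G Z = VX G K ∧ ¬ Acyclic G Z)
      (Set.toFinite K) ⟨hconn, rfl, hnac⟩
  obtain ⟨C₁, hC₁Z, hC₁⟩ : ∃ C, C ⊆ Z ∧ IsCycle G C := by
    by_contra h
    push_neg at h
    exact hZnac (fun C hC hCc => h C hC hCc)
  have hge : (VX G Z).ncard ≤ Z.ncard := by
    have := excess hZconn hC₁.2.1 hC₁Z hC₁.1
    have := cycle_ncard hC₁
    omega
  rcases Nat.eq_or_lt_of_le hge with heq | hlt
  · exact ⟨Z, hZK, hZconn, hZVX, heq.symm⟩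
  exfalso
  have h2c : TwoCycles G Z := two_cycles_of_card hZconn hlt
  obtain ⟨D₁, D₂, hD₁Z, hD₂Z, hD₁, hD₂, hDne⟩ := h2c
  obtain ⟨g, hgD₁, hgD₂⟩ : ∃ g, g ∈ D₁ ∧ g ∉ D₂ := by
    by_contra h
    push_neg at h
    exact hDne (cycle_incomp hD₂ hD₁ h)
  have hgZ : g ∈ Z := hD₁Z hgD₁
  have hZ'ss : Z \ {g} ⊂ Z := by
    constructor
    · exact diff_subset
    · intro h
      exact (h hgZ).2 rfl
  apply hZmin (Z \ {g}) hZ'ss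
  refine ⟨conn_del_cycle hZconn hD₁ hD₁Z hgD₁, ?_, ?_⟩
  · -- VX preserved
    rw [← hZVX]
    apply Set.Subset.antisymm (VX_mono diff_subset)
    intro x hx
    obtain ⟨f, hf, hxf⟩ := hx
    by_cases hfg : f = g
    · subst hfg
      by_cases hD₁g : D₁ = {f}
      · -- loop case
        have hdiag := singleton_cycle_diag (hD₁g ▸ hD₁)
        obtain ⟨a, b, hab⟩ := sym2_exists_rep (G.ends f)
        have hba : a = b := by rwa [hab, Sym2.mk_isDiag_iff] at hdiag
        subst hba
        have hxa : x = a := by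
          rw [hab, Sym2.mem_iff] at hxf
          tauto
        subst hxa
        -- find another edge at a using connectivity to D₂
        obtain ⟨d₂, hd₂⟩ := hD₂.1
        have hd₂Z : d₂ ∈ Z := hD₂Z hd₂
        have hd₂f : d₂ ≠ f := fun h => hgD₂ (h ▸ hd₂)
        have hrtg := hZconn f hgZ d₂ hd₂Z
        have claim : ∀ y, Relation.ReflTransGen (EAdj G Z) f y →
            y = f ∨ ∃ h₂, h₂ ∈ Z ∧ h₂ ≠ f ∧ x ∈ G.ends h₂ := by
          intro y hy
          induction hy with
          | refl => exact Or.inl rfl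
          | tail hsteps hstep ih =>
            rename_i b' c'
            rcases ih with heq | hdone
            · by_cases hc'f : c' = f
              · exact Or.inl hc'f
              · obtain ⟨-, hc'Z, v', hv'b, hv'c⟩ := hstep
                rw [heq] at hv'b
                have : v' = x := by
                  rw [hab, Sym2.mem_iff] at hv'b
                  tauto
                exact Or.inr ⟨c', hc'Z, hc'f, this ▸ hv'c⟩
            · exact Or.inr hdone
        rcases claim d₂ hrtg with h | ⟨h₂, hh₂Z, hh₂f, hxh₂⟩
        · exact absurd h hd₂f
        · exact ⟨h₂, ⟨hh₂Z, hh₂f⟩, hxh₂⟩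
      · obtain ⟨-, hVXD⟩ := cycle_del_core hD₁ hgD₁ hD₁g
        have := hVXD x hxf
        obtain ⟨h₂, hh₂, hxh₂⟩ := this
        exact ⟨h₂, ⟨hD₁Z hh₂.1, hh₂.2⟩, hxh₂⟩
    · exact ⟨f, ⟨hf, hfg⟩, hxf⟩
  · -- still not acyclic
    intro hac
    exact hac D₂ (fun x hx => ⟨hD₂Z hx, fun h => hgD₂ (h ▸ hx)⟩) hD₂

end cycdel

/-! ### component counting -/

section compcount
variable [Fintype V] [Fintype E]

def CS (G : MGraph V E) (A : Set E) : Set (Set E) := {K | ∃ x ∈ A, K = cmp G A x}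

noncomputable def cN (G : MGraph V E) (A : Set E) : ℕ := (CS G A).ncard

noncomputable def aN (G : MGraph V E) (A : Set E) : ℕ :=
  {K ∈ CS G A | Acyclic G K}.ncard

lemma CS_empty : CS G (∅ : Set E) = ∅ := by
  ext K
  simp only [CS, Set.mem_setOf_eq, Set.mem_empty_iff_false, iff_false]
  rintro ⟨x, hx, -⟩
  exact hx

lemma cmp_peel_agree (hx : e ∈ A) {y : E} (hy : y ∈ A \ cmp G A e) :
    cmp G (A \ cmp G A e) y = cmp G A y := by
  apply Set.Subset.antisymm
  · rintro z ⟨hz, hr⟩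
    exact ⟨hz.1, Relation.ReflTransGen.mono (fun a b h => ⟨h.1.1, h.2.1.1, h.2.2⟩) _ _ hr⟩
  · rintro z ⟨hz, hr⟩
    have claim : ∀ b, Relation.ReflTransGen (EAdj G A) y b → b ∈ cmp G (A \ cmp G A e) y := by
      intro b hb
      induction hb with
      | refl => exact mem_cmp_self hy
      | tail h₁ h₂ ih =>
        rename_i b' c
        have hcA : c ∈ A := h₂.2.1
        have hcK : c ∉ cmp G A e := by
          intro hcK
          have hb'K : b' ∈ cmp G A e := cmp_closed hcK h₂.symm'
          exact (cmp_subset ih).2 hb'K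
        exact cmp_closed ih ⟨cmp_subset ih, ⟨hcA, hcK⟩, h₂.2.2⟩
    exact claim z hr

lemma CS_peel (hx : e ∈ A) :
    CS G (A \ cmp G A e) = CS G A \ {cmp G A e} := by
  ext L
  constructor
  · rintro ⟨y, hy, rfl⟩
    rw [cmp_peel_agree hx hy]
    refine ⟨⟨y, hy.1, rfl⟩, ?_⟩
    intro h
    have hyL : y ∈ cmp G A y := mem_cmp_self hy.1
    rw [Set.mem_singleton_iff] at h
    exact hy.2 (h ▸ hyL)
  · rintro ⟨⟨y, hyA, rfl⟩, hneK⟩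
    rw [Set.mem_singleton_iff] at hneK
    have hyK : y ∉ cmp G A e := by
      intro hyK
      exact hneK (cmp_eq_of_mem hx hyK)
    exact ⟨y, ⟨hyA, hyK⟩, (cmp_peel_agree hx ⟨hyA, hyK⟩).symm⟩

lemma cN_peel (hx : e ∈ A) : cN G (A \ cmp G A e) + 1 = cN G A := by
  unfold cN
  rw [CS_peel hx]
  have hmem : cmp G A e ∈ CS G A := ⟨e, hx, rfl⟩
  have := Set.ncard_diff_singleton_of_mem hmem
  have hpos : 0 < (CS G A).ncard := (Set.ncard_pos (Set.toFinite _)).mpr ⟨_, hmem⟩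
  omega

lemma aN_seteq (hx : e ∈ A) : {K ∈ CS G (A \ cmp G A e) | Acyclic G K}
    = {K ∈ CS G A | Acyclic G K} \ {cmp G A e} := by
  rw [CS_peel hx]
  ext L
  constructor
  · rintro ⟨⟨h1, h2⟩, h3⟩
    exact ⟨⟨h1, h3⟩, h2⟩
  · rintro ⟨⟨h1, h3⟩, h2⟩
    exact ⟨⟨h1, h2⟩, h3⟩

lemma aN_peel_acyc (hx : e ∈ A) (hac : Acyclic G (cmp G A e)) :
    aN G (A \ cmp G A e) + 1 = aN G A := by
  unfold aN
  rw [aN_seteq hx]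
  have hmem : cmp G A e ∈ {K ∈ CS G A | Acyclic G K} := ⟨⟨e, hx, rfl⟩, hac⟩
  have := Set.ncard_diff_singleton_of_mem hmem
  have hpos : 0 < ({K ∈ CS G A | Acyclic G K}).ncard :=
    (Set.ncard_pos (Set.toFinite _)).mpr ⟨_, hmem⟩
  omega

lemma aN_peel_nacyc (hx : e ∈ A) (hac : ¬ Acyclic G (cmp G A e)) :
    aN G (A \ cmp G A e) = aN G A := by
  unfold aN
  rw [aN_seteq hx, Set.diff_singleton_eq_self (fun h => hac h.2)]

lemma VX_peel_disj (hx : e ∈ A) :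
    VX G (cmp G A e) ∩ VX G (A \ cmp G A e) = ∅ := by
  rw [Set.eq_empty_iff_forall_notMem]
  rintro v ⟨⟨p, hp, hvp⟩, ⟨q, hq, hvq⟩⟩
  exact hq.2 (cmp_closed hp ⟨cmp_subset hp, hq.1, v, hvp, hvq⟩)

lemma VX_peel (hx : e ∈ A) :
    (VX G (cmp G A e)).ncard + (VX G (A \ cmp G A e)).ncard = (VX G A).ncard := by
  have hunion : VX G (cmp G A e) ∪ VX G (A \ cmp G A e) = VX G A := by
    rw [← VX_union, Set.union_diff_cancel (cmp_subset)]
  have hdisj : Disjoint (VX G (cmp G A e)) (VX G (A \ cmp G A e)) := by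
    rw [Set.disjoint_iff_inter_eq_empty]
    exact VX_peel_disj hx
  rw [← hunion, Set.ncard_union_eq hdisj (Set.toFinite _) (Set.toFinite _)]

lemma edge_peel (hx : e ∈ A) :
    (cmp G A e).ncard + (A \ cmp G A e).ncard = A.ncard := by
  have h1 := Set.ncard_diff (cmp_subset (G := G) (A := A) (e := e)) (Set.toFinite _)
  have h2 : (cmp G A e).ncard ≤ A.ncard := Set.ncard_le_ncard cmp_subset (Set.toFinite _)
  omega

lemma no2cyc_card_aux : ∀ (n : ℕ) (J : Set E), J.ncard ≤ n →
    (∀ W, W ⊆ J → ConnOn G W → ¬TwoCycles G W) → J.ncard ≤ (VX G J).ncard := by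
  intro n
  induction n with
  | zero =>
    intro J hn _
    omega
  | succ n ih =>
    intro J hn hJ
    rcases Set.eq_empty_or_nonempty J with rfl | ⟨x, hx⟩
    · simp
    have hKconn : ConnOn G (cmp G J x) := cmp_conn hx
    have hK : (cmp G J x).ncard ≤ (VX G (cmp G J x)).ncard := by
      by_contra h
      push_neg at h
      exact hJ _ cmp_subset hKconn (two_cycles_of_card hKconn (by omega))
    have hKne : (cmp G J x).Nonempty := ⟨x, mem_cmp_self hx⟩
    have hKpos : 0 < (cmp G J x).ncard := (Set.ncard_pos (Set.toFinite _)).mpr hKne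
    have hIH := ih (J \ cmp G J x) (by
      have := edge_peel (G := G) hx
      omega) (fun W hW => hJ W (hW.trans diff_subset))
    have := edge_peel (G := G) hx
    have := VX_peel (G := G) hx
    omega

lemma count_agg_aux (T : Set V) : ∀ (n : ℕ) (A : Set E), A.ncard ≤ n →
    (∀ x ∈ A, (VX G (cmp G A x) ∩ T).Nonempty) →
    (∀ x ∈ A, Acyclic G (cmp G A x) → 2 ≤ (VX G (cmp G A x) ∩ T).ncard) →
    cN G A + aN G A ≤ (VX G A ∩ T).ncard := by
  intro n
  induction n with
  | zero =>
    intro A hn _ _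
    have hA : A = ∅ := (Set.ncard_eq_zero (Set.toFinite _)).mp (Nat.le_zero.mp hn)
    subst hA
    have h1 : cN G (∅ : Set E) = 0 := by
      unfold cN
      rw [CS_empty, Set.ncard_empty]
    have h2 : aN G (∅ : Set E) = 0 := by
      unfold aN
      rw [CS_empty]
      simp
    omega
  | succ n ih =>
    intro A hn h1 h2
    rcases Set.eq_empty_or_nonempty A with rfl | ⟨x, hx⟩
    · have ha : cN G (∅ : Set E) = 0 := by
        unfold cN; rw [CS_empty, Set.ncard_empty]
      have hb : aN G (∅ : Set E) = 0 := by
        unfold aN; rw [CS_empty]; simp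
      omega
    have hKne : (cmp G A x).Nonempty := ⟨x, mem_cmp_self hx⟩
    have hIH := ih (A \ cmp G A x) (by
      have := edge_peel (G := G) hx
      have : 0 < (cmp G A x).ncard := (Set.ncard_pos (Set.toFinite _)).mpr hKne
      omega)
      (fun y hy => by
        rw [cmp_peel_agree hx hy]
        exact h1 y hy.1)
      (fun y hy hac => by
        rw [cmp_peel_agree hx hy]
        rw [cmp_peel_agree hx hy] at hac
        exact h2 y hy.1 hac)
    have hsum : (VX G (cmp G A x) ∩ T).ncard + (VX G (A \ cmp G A x) ∩ T).ncard
        ≤ (VX G A ∩ T).ncard := by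
      have hdisj : Disjoint (VX G (cmp G A x) ∩ T) (VX G (A \ cmp G A x) ∩ T) := by
        rw [Set.disjoint_iff_inter_eq_empty, Set.eq_empty_iff_forall_notMem]
        rintro v ⟨⟨hv1, -⟩, ⟨hv2, -⟩⟩
        exact Set.eq_empty_iff_forall_notMem.mp (VX_peel_disj hx) v ⟨hv1, hv2⟩
      have hsub : (VX G (cmp G A x) ∩ T) ∪ (VX G (A \ cmp G A x) ∩ T) ⊆ VX G A ∩ T := by
        rintro v (⟨hv, hvT⟩ | ⟨hv, hvT⟩)
        · exact ⟨VX_mono cmp_subset hv, hvT⟩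
        · exact ⟨VX_mono diff_subset hv, hvT⟩
      calc (VX G (cmp G A x) ∩ T).ncard + (VX G (A \ cmp G A x) ∩ T).ncard
          = ((VX G (cmp G A x) ∩ T) ∪ (VX G (A \ cmp G A x) ∩ T)).ncard :=
            (Set.ncard_union_eq hdisj (Set.toFinite _) (Set.toFinite _)).symm
      _ ≤ _ := Set.ncard_le_ncard hsub (Set.toFinite _)
    have hcN := cN_peel (G := G) hx
    have hKT : 1 ≤ (VX G (cmp G A x) ∩ T).ncard :=
      (Set.ncard_pos (Set.toFinite _)).mpr (h1 x hx)
    by_cases hac : Acyclic G (cmp G A x)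
    · have haN := aN_peel_acyc (G := G) hx hac
      have hKT2 := h2 x hx hac
      omega
    · have haN := aN_peel_nacyc (G := G) hx hac
      omega

lemma forest_card_aux : ∀ (n : ℕ) (A : Set E), A.ncard ≤ n →
    (∀ x ∈ A, Acyclic G (cmp G A x)) →
    A.ncard + cN G A = (VX G A).ncard := by
  intro n
  induction n with
  | zero =>
    intro A hn _
    have hA : A = ∅ := (Set.ncard_eq_zero (Set.toFinite _)).mp (Nat.le_zero.mp hn)
    subst hA
    have h1 : cN G (∅ : Set E) = 0 := by
      unfold cN; rw [CS_empty, Set.ncard_empty]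
    have h2 : VX G (∅ : Set E) = ∅ := by
      ext v
      simp only [Set.mem_empty_iff_false, iff_false]
      rintro ⟨f, hf, -⟩
      exact hf
    rw [h1, h2]
    simp
  | succ n ih =>
    intro A hn hac
    rcases Set.eq_empty_or_nonempty A with rfl | ⟨x, hx⟩
    · have h1 : cN G (∅ : Set E) = 0 := by
        unfold cN; rw [CS_empty, Set.ncard_empty]
      have h2 : VX G (∅ : Set E) = ∅ := by
        ext v
        simp only [Set.mem_empty_iff_false, iff_false]
        rintro ⟨f, hf, -⟩
        exact hf
      rw [h1, h2]
      simp
    have hKne : (cmp G A x).Nonempty := ⟨x, mem_cmp_self hx⟩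
    have hKconn : ConnOn G (cmp G A x) := cmp_conn hx
    have hKcard : (cmp G A x).ncard + 1 = (VX G (cmp G A x)).ncard := by
      have h1 := acyclic_card (hac x hx) hKne
      have h2 := conn_card hKconn hKne
      omega
    have hIH := ih (A \ cmp G A x) (by
      have := edge_peel (G := G) hx
      have : 0 < (cmp G A x).ncard := (Set.ncard_pos (Set.toFinite _)).mpr hKne
      omega)
      (fun y hy => by
        rw [cmp_peel_agree hx hy]
        exact hac y hy.1)
    have := edge_peel (G := G) hx
    have := VX_peel (G := G) hx
    have := cN_peel (G := G) hx
    omega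

end compcount

/-! ### misc glue lemmas -/

section misc
variable [Fintype V] [Fintype E]

lemma conn_split {P Q W : Set E} (hW : ConnOn G W) (hWPQ : W ⊆ P ∪ Q)
    (hdisj : VX G P ∩ VX G Q = ∅) : W ⊆ P ∨ W ⊆ Q := by
  rcases Set.eq_empty_or_nonempty W with rfl | ⟨w₀, hw₀⟩
  · exact Or.inl (Set.empty_subset P)
  have key : ∀ (R S : Set E), VX G R ∩ VX G S = ∅ → w₀ ∈ R → W ⊆ R ∪ S →
      ∀ b, Relation.ReflTransGen (EAdj G W) w₀ b → b ∈ R := by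
    intro R S hRS hw₀R hWRS b hb
    induction hb with
    | refl => exact hw₀R
    | tail h₁ h₂ ih =>
      rename_i b' c
      obtain ⟨hb'W, hcW, v, hvb, hvc⟩ := h₂
      rcases hWRS hcW with h | h
      · exact h
      · exfalso
        exact Set.eq_empty_iff_forall_notMem.mp hRS v ⟨⟨b', ih, hvb⟩, ⟨c, h, hvc⟩⟩
  rcases hWPQ hw₀ with h | h
  · exact Or.inl (fun w hw => key P Q hdisj h hWPQ w (hW w₀ hw₀ w hw))
  · refine Or.inr (fun w hw => key Q P ?_ h (by rwa [Set.union_comm]) w (hW w₀ hw₀ w hw))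
    rw [Set.inter_comm]
    exact hdisj

lemma tree_two_leaves (hconn : ConnOn G K) (hac : Acyclic G K) (hne : K.Nonempty) :
    ∃ u w, u ≠ w ∧ u ∈ VX G K ∧ w ∈ VX G K ∧ deg G K u = 1 ∧ deg G K w = 1 := by
  classical
  have hcard : K.ncard + 1 = (VX G K).ncard := by
    have h1 := acyclic_card hac hne
    have h2 := conn_card hconn hne
    omega
  have hhs := handshake_VX (G := G) (X := K)
  set T := (Set.toFinite (VX G K)).toFinset with hT
  have hTcard : T.card = (VX G K).ncard := (Set.ncard_eq_toFinset_card _ _).symm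
  set L := T.filter (fun v => deg G K v = 1) with hL
  have hLb : 2 ≤ L.card := by
    by_contra h
    push_neg at h
    have hpt : ∀ v ∈ T, (if deg G K v = 1 then 1 else 2) ≤ deg G K v := by
      intro v hv
      have h1 : 1 ≤ deg G K v := one_le_deg ((Set.Finite.mem_toFinset _).mp hv)
      split_ifs with hd
      · omega
      · omega
    have hlow : ∑ v ∈ T, (if deg G K v = 1 then 1 else 2) ≤ ∑ v ∈ T, deg G K v :=
      Finset.sum_le_sum hpt
    have hpt2 : ∀ v ∈ T, (if deg G K v = 1 then 1 else 2) + (if deg G K v = 1 then 1 else 0)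
        = 2 := by
      intro v _
      split_ifs <;> rfl
    have hs2 : ∑ v ∈ T, ((if deg G K v = 1 then 1 else 2) + (if deg G K v = 1 then 1 else 0))
        = 2 * T.card := by
      rw [Finset.sum_congr rfl hpt2, Finset.sum_const, smul_eq_mul]
      ring
    rw [Finset.sum_add_distrib] at hs2
    have hs10 : ∑ v ∈ T, (if deg G K v = 1 then 1 else 0) = L.card := by
      rw [hL, Finset.sum_boole]
      simp
    omega
  obtain ⟨u, hu, w, hw, huw⟩ := Finset.one_lt_card.mp (by omega : 1 < L.card)
  rw [hL, Finset.mem_filter] at hu hw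
  exact ⟨u, w, huw, (Set.Finite.mem_toFinset _).mp hu.1, (Set.Finite.mem_toFinset _).mp hw.1,
    hu.2, hw.2⟩

lemma comp_touches (hG : GConn G) {A B K : Set E} (hB : B.Nonempty)
    (hKne : K.Nonempty)
    (hclosed : ∀ h ∈ A, (∃ v, v ∈ G.ends h ∧ v ∈ VX G K) → h ∈ K)
    (hAB : ∀ h : E, h ∈ A ∨ h ∈ B) :
    ∃ v, v ∈ VX G K ∧ v ∈ VX G B := by
  obtain ⟨k₀, hk₀⟩ := hKne
  obtain ⟨u₀, hu₀⟩ := sym2_exists_mem (G.ends k₀)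
  obtain ⟨b₀, hb₀⟩ := hB
  obtain ⟨z, hz⟩ := sym2_exists_mem (G.ends b₀)
  have claim : ∀ y, Relation.ReflTransGen (VAdj G) u₀ y →
      y ∈ VX G K ∨ ∃ v, v ∈ VX G K ∧ v ∈ VX G B := by
    intro y hy
    induction hy with
    | refl => exact Or.inl ⟨k₀, hk₀, hu₀⟩
    | tail h₁ h₂ ih =>
      rename_i y' y''
      rcases ih with hy'K | hdone
      · obtain ⟨h, hy', hy''⟩ := h₂
        rcases hAB h with hA | hB'
        · exact Or.inl ⟨h, hclosed h hA ⟨y', hy', hy'K⟩, hy''⟩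
        · exact Or.inr ⟨y', hy'K, ⟨h, hB', hy'⟩⟩
      · exact Or.inr hdone
  rcases claim z (hG u₀ z) with h | h
  · exact ⟨z, h, ⟨b₀, hb₀, hz⟩⟩
  · exact h

lemma every_vertex (hG : GConn G) (hV : 3 ≤ Fintype.card V) (v : V) :
    v ∈ VX G (Set.univ : Set E) := by
  obtain ⟨u, hu⟩ := Fintype.exists_ne_of_one_lt_card (by omega) v
  rcases (hG v u).cases_head with h | ⟨c, ⟨e, hv, -⟩, -⟩
  · exact absurd h.symm hu
  · exact ⟨e, Set.mem_univ e, hv⟩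

lemma conn_univ (hG : GConn G) : ConnOn G (Set.univ : Set E) := by
  intro a _ b _
  obtain ⟨u, hu⟩ := sym2_exists_mem (G.ends a)
  obtain ⟨w, hw⟩ := sym2_exists_mem (G.ends b)
  have claim : ∀ y, Relation.ReflTransGen (VAdj G) u y →
      ∀ h : E, y ∈ G.ends h → Relation.ReflTransGen (EAdj G Set.univ) a h := by
    intro y hy
    induction hy with
    | refl =>
      intro h hyh
      exact Relation.ReflTransGen.single ⟨Set.mem_univ a, Set.mem_univ h, u, hu, hyh⟩
    | tail h₁ h₂ ih =>
      rename_i y' y''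
      obtain ⟨k, hy', hy''⟩ := h₂
      intro h hyh
      exact (ih k hy').tail ⟨Set.mem_univ k, Set.mem_univ h, y'', hy'', hyh⟩
  exact claim w (hG u w) b hw

lemma two_edges (hG : GConn G) (hV : 3 ≤ Fintype.card V) : ∃ e f : E, e ≠ f := by
  by_contra h
  push_neg at h
  obtain ⟨a, b, c, hab, hac, hbc⟩ := Fintype.two_lt_card_iff.mp
    (show 2 < Fintype.card V by omega)
  obtain ⟨e, -, hae⟩ := every_vertex hG hV a
  obtain ⟨p, q, hpq⟩ := sym2_exists_rep (G.ends e)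
  have hmem : ∀ v : V, v ∈ G.ends e := by
    intro v
    obtain ⟨f, -, hf⟩ := every_vertex hG hV v
    rwa [h f e] at hf
  have h1 := hmem a
  have h2 := hmem b
  have h3 := hmem c
  rw [hpq, Sym2.mem_iff] at h1 h2 h3
  rcases h1 with rfl | rfl <;> rcases h2 with rfl | rfl <;> rcases h3 with rfl | rfl <;>
    simp_all

lemma mindeg_two (hG : GConn G) (hV : 3 ≤ Fintype.card V)
    (hp : ¬ PendentEdge G (Set.univ : Set E)) (v : V) :
    2 ≤ deg G (Set.univ : Set E) v := by
  have hvVX := every_vertex hG hV v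
  have h1 := one_le_deg (G := G) hvVX
  by_contra h
  push_neg at h
  have hdeg1 : deg G Set.univ v = 1 := by omega
  unfold deg at hdeg1
  have hsub : {e : E | e ∈ Set.univ ∧ G.ends e = s(v, v)} ⊆
      {e : E | e ∈ Set.univ ∧ v ∈ G.ends e} := by
    rintro e ⟨he, he2⟩
    exact ⟨he, by rw [he2]; simp⟩
  have hle := Set.ncard_le_ncard hsub (Set.toFinite _)
  have hL0 : ({e : E | e ∈ Set.univ ∧ G.ends e = s(v, v)}).ncard = 0 := by omega
  have hI1 : ({e : E | e ∈ Set.univ ∧ v ∈ G.ends e}).ncard = 1 := by omega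
  obtain ⟨e, he⟩ := Set.ncard_eq_one.mp hI1
  have heP : e ∈ {e : E | e ∈ Set.univ ∧ v ∈ G.ends e} := by rw [he]; rfl
  refine hp ⟨e, Set.mem_univ e, v, heP.2, ?_⟩
  unfold deg
  omega

lemma bicycle_exists (h1 : ConnOn G X) (h2 : TwoCycles G X) :
    ∃ Z, Z ⊆ X ∧ IsBicycle G Z := by
  obtain ⟨Z, hZX, hPZ, hmin⟩ :=
    exists_minimal_subset (P := fun Z => ConnOn G Z ∧ TwoCycles G Z) (Set.toFinite X) ⟨h1, h2⟩
  exact ⟨Z, hZX, hPZ, fun Y hY hp => hmin Y hY hp⟩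

end misc

/-! ### per-side independent spanning set -/

section side
variable [Fintype V] [Fintype E]

lemma VX_empty : VX G (∅ : Set E) = ∅ := by
  ext v
  simp only [Set.mem_empty_iff_false, iff_false]
  rintro ⟨f, hf, -⟩
  exact hf

lemma aN_empty : aN G (∅ : Set E) = 0 := by
  unfold aN
  rw [CS_empty]
  simp

lemma side_aux : ∀ (n : ℕ) (A : Set E), A.ncard ≤ n →
    ∃ I, I ⊆ A ∧ (∀ W, W ⊆ I → ConnOn G W → ¬TwoCycles G W) ∧
      I.ncard + aN G A = (VX G A).ncard := by
  classical
  intro n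
  induction n with
  | zero =>
    intro A hn
    have hA : A = ∅ := (Set.ncard_eq_zero (Set.toFinite _)).mp (Nat.le_zero.mp hn)
    subst hA
    refine ⟨∅, subset_rfl, ?_, ?_⟩
    · rintro W hW _ ⟨C₁, C₂', hC₁W, -, hC₁, -, -⟩
      obtain ⟨c, hc⟩ := hC₁.1
      exact (hW (hC₁W hc))
    · rw [aN_empty, VX_empty]
      simp
  | succ n ih =>
    intro A hn
    rcases Set.eq_empty_or_nonempty A with rfl | ⟨x, hx⟩
    · refine ⟨∅, subset_rfl, ?_, ?_⟩
      · rintro W hW _ ⟨C₁, C₂', hC₁W, -, hC₁, -, -⟩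
        obtain ⟨c, hc⟩ := hC₁.1
        exact (hW (hC₁W hc))
      · rw [aN_empty, VX_empty]
        simp
    have hKne : (cmp G A x).Nonempty := ⟨x, mem_cmp_self hx⟩
    have hKconn : ConnOn G (cmp G A x) := cmp_conn hx
    obtain ⟨I', hI'sub, hI'no2, hI'card⟩ := ih (A \ cmp G A x) (by
      have := edge_peel (G := G) hx
      have : 0 < (cmp G A x).ncard := (Set.ncard_pos (Set.toFinite _)).mpr hKne
      omega)
    obtain ⟨IK, hIKsub, hIKno2, hIKcard⟩ :
        ∃ IK, IK ⊆ cmp G A x ∧ (∀ W, W ⊆ IK → ConnOn G W → ¬TwoCycles G W) ∧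
          IK.ncard + (if Acyclic G (cmp G A x) then 1 else 0)
            = (VX G (cmp G A x)).ncard := by
      classical
      by_cases hac : Acyclic G (cmp G A x)
      · refine ⟨cmp G A x, subset_rfl, ?_, ?_⟩
        · rintro W hW _ ⟨C₁, C₂', hC₁W, -, hC₁, -, -⟩
          exact hac C₁ ((hC₁W.trans hW)) hC₁
        · rw [if_pos hac]
          have h1 := acyclic_card hac hKne
          have h2 := conn_card hKconn hKne
          omega
      · obtain ⟨Z, hZK, hZconn, hZVX, hZcard⟩ := spanning_unicyclic hKconn hKne hac
        refine ⟨Z, hZK, ?_, ?_⟩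
        · intro W hW hWconn h2W
          have hWne : W.Nonempty := by
            obtain ⟨C₁, C₂', hC₁W, -, hC₁, -, -⟩ := h2W
            exact hC₁.1.mono hC₁W
          have hcc := card_of_two_cycles hWconn h2W
          have hex := excess hZconn hWconn hW hWne
          omega
        · rw [if_neg hac, hZVX] at *
          omega
    refine ⟨IK ∪ I', Set.union_subset (hIKsub.trans cmp_subset)
      (hI'sub.trans diff_subset), ?_, ?_⟩
    · intro W hW hWconn h2W
      have hdisj : VX G IK ∩ VX G I' = ∅ := by
        rw [Set.eq_empty_iff_forall_notMem]
        rintro v ⟨hv1, hv2⟩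
        exact Set.eq_empty_iff_forall_notMem.mp (VX_peel_disj hx) v
          ⟨VX_mono hIKsub hv1, VX_mono hI'sub hv2⟩
      rcases conn_split hWconn hW hdisj with h | h
      · exact hIKno2 W h hWconn h2W
      · exact hI'no2 W h hWconn h2W
    · have hdisjE : Disjoint IK I' := by
        rw [Set.disjoint_left]
        intro a ha ha'
        exact (hI'sub ha').2 (hIKsub ha)
      rw [Set.ncard_union_eq hdisjE (Set.toFinite _) (Set.toFinite _)]
      have hVXp := VX_peel (G := G) hx
      classical
      by_cases hac : Acyclic G (cmp G A x)
      · have haN := aN_peel_acyc (G := G) hx hac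
        rw [if_pos hac] at hIKcard
        omega
      · have haN := aN_peel_nacyc (G := G) hx hac
        rw [if_neg hac] at hIKcard
        omega

lemma side_lemma (A : Set E) :
    ∃ I, I ⊆ A ∧ (∀ W, W ⊆ I → ConnOn G W → ¬TwoCycles G W) ∧
      I.ncard + aN G A = (VX G A).ncard :=
  side_aux A.ncard A le_rfl

end side


end AuxGraph

end Bicirc

open Bicirc in
theorem stmt3 {V E : Type*} [Fintype V] [Fintype E] (G : MGraph V E)
    (hG : GConn G) (hV : 3 ≤ Fintype.card V)
    (M : Matroid E) (hM : IsBicircOf G M) :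
    MConn M ↔ (¬ IsCycle G Set.univ ∧ ¬ PendentEdge G Set.univ) := by
  classical
  obtain ⟨hME, hMcirc⟩ := hM
  obtain ⟨e₁, e₂, he₁₂⟩ := two_edges hG hV
  have hmemE : ∀ x : E, x ∈ M.E := by
    intro x
    rw [hME]
    trivial
  constructor
  · rintro ⟨-, hconn⟩
    constructor
    · -- not a cycle
      intro hcyc
      obtain ⟨C, hC, heC, hfC⟩ := hconn e₁ (hmemE e₁) e₂ (hmemE e₂) he₁₂
      obtain ⟨⟨hCconn, C₁, C₂, h1, h2, hc1, hc2, hne⟩, -⟩ := (hMcirc C).mp hC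
      have e1 : C₁ = Set.univ := cycle_incomp hcyc hc1 (Set.subset_univ _)
      have e2 : C₂ = Set.univ := cycle_incomp hcyc hc2 (Set.subset_univ _)
      exact hne (e1.trans e2.symm)
    · -- no pendent edge
      rintro ⟨p, -, w, hwp, hdegw⟩
      obtain ⟨f, hf⟩ : ∃ f : E, f ≠ p := by
        rcases eq_or_ne e₁ p with rfl | h
        · exact ⟨e₂, fun h' => he₁₂ h'.symm⟩
        · exact ⟨e₁, h⟩
      obtain ⟨C, hC, hpC, hfC⟩ := hconn p (hmemE p) f (hmemE f) (fun h => hf h.symm)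
      obtain ⟨⟨hCconn, C₁, C₂, h1X, h2X, hc1, hc2, hne12⟩, hmin⟩ := (hMcirc C).mp hC
      -- only edge at w is p
      have hponly : ∀ h' : E, w ∈ G.ends h' → h' = p := by
        unfold deg at hdegw
        have hsub : {x : E | x ∈ (Set.univ : Set E) ∧ G.ends x = s(w, w)} ⊆
            {x : E | x ∈ (Set.univ : Set E) ∧ w ∈ G.ends x} := by
          rintro x ⟨hx, hx2⟩
          exact ⟨hx, by rw [hx2]; simp⟩
        have hle := Set.ncard_le_ncard hsub (Set.toFinite _)
        have hI1 : ({x : E | x ∈ (Set.univ : Set E) ∧ w ∈ G.ends x}).ncard = 1 := by omega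
        obtain ⟨q, hq⟩ := Set.ncard_eq_one.mp hI1
        have hpq : p ∈ {x : E | x ∈ (Set.univ : Set E) ∧ w ∈ G.ends x} :=
          ⟨Set.mem_univ p, hwp⟩
        rw [hq] at hpq
        intro h' hwh'
        have : h' ∈ {x : E | x ∈ (Set.univ : Set E) ∧ w ∈ G.ends x} :=
          ⟨Set.mem_univ h', hwh'⟩
        rw [hq] at this
        rw [this, hpq]
      have hnotin : ∀ D : Set E, IsCycle G D → p ∉ D := by
        intro D hD hp
        have hwVX : w ∈ VX G D := ⟨p, hp, hwp⟩
        have h2w := hD.2.2 w hwVX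
        have hle : deg G D w ≤ deg G Set.univ w := deg_mono (Set.subset_univ _)
        omega
      have hCp : ConnOn G (C \ {p}) := by
        apply conn_del hCconn
        rintro c hc d hd ⟨vc, hvc, hvcp⟩ ⟨vd, hvd, hvdp⟩
        have hends := (Sym2.other_spec' hwp).symm
        have hkey : ∀ z (x : E), x ∈ C \ {p} → z ∈ G.ends x → z ∈ G.ends p →
            z = Sym2.Mem.other' hwp := by
          intro z x hx hzx hzp
          rw [hends, Sym2.mem_iff] at hzp
          rcases hzp with rfl | h
          · exact absurd (hponly x hzx) hx.2
          · exact h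
        have h1 := hkey vc c hc hvc hvcp
        have h2 := hkey vd d hd hvd hvdp
        exact Relation.ReflTransGen.single
          ⟨hc, hd, Sym2.Mem.other' hwp, h1 ▸ hvc, h2 ▸ hvd⟩
      have h2cp : TwoCycles G (C \ {p}) := by
        refine ⟨C₁, C₂, ?_, ?_, hc1, hc2, hne12⟩
        · exact fun y hy => ⟨h1X hy, fun h => hnotin C₁ hc1 (h ▸ hy)⟩
        · exact fun y hy => ⟨h2X hy, fun h => hnotin C₂ hc2 (h ▸ hy)⟩
      exact hmin (C \ {p}) ⟨diff_subset, fun h => (h hpC).2 rfl⟩ ⟨hCp, h2cp⟩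
  · rintro ⟨hnotcyc, hnotpend⟩
    refine ⟨by rw [hME]; exact ⟨e₁, Set.mem_univ e₁⟩, ?_⟩
    intro e he f hf hef
    by_contra hno
    -- the separator
    set A : Set E := {x | x = e ∨ ∃ C, Circ M C ∧ e ∈ C ∧ x ∈ C} with hAdef
    set B : Set E := Set.univ \ A with hBdef
    have heA : e ∈ A := Or.inl rfl
    have hfA : f ∉ A := by
      rintro (rfl | ⟨C, hC, heC, hfC⟩)
      · exact hef rfl
      · exact hno ⟨C, hC, heC, hfC⟩
    have hfB : f ∈ B := ⟨Set.mem_univ f, hfA⟩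
    have hfinE : M.E.Finite := by rw [hME]; exact Set.finite_univ
    have hsep : ∀ C, Circ M C → C ⊆ A ∨ C ∩ A = ∅ := by
      intro C hC
      by_cases hmeet : (C ∩ A).Nonempty
      · left
        obtain ⟨x, hxC, hxA⟩ := hmeet
        intro y hyC
        rcases hxA with rfl | ⟨C', hC', heC', hxC'⟩
        · exact Or.inr ⟨C, hC, hxC, hyC⟩
        · rcases circ_trans hfinE hC' heC' hC hyC ⟨x, hxC', hxC⟩ with heq | ⟨D, hD, heD, hyD⟩
          · exact Or.inl heq.symm
          · exact Or.inr ⟨D, hD, heD, hyD⟩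
      · right
        exact Set.not_nonempty_iff_eq_empty.mp hmeet
    have hABunion : A ∪ B = Set.univ := by
      rw [hBdef, Set.union_diff_cancel (Set.subset_univ A)]
    have hABdisj : A ∩ B = ∅ := by
      rw [hBdef, Set.eq_empty_iff_forall_notMem]
      rintro x ⟨hxA, -, hxB⟩
      exact hxB hxA
    have hmd := mindeg_two hG hV hnotpend
    have hVXuniv : VX G (Set.univ : Set E) = Set.univ :=
      Set.eq_univ_of_forall (every_vertex hG hV)
    -- at least |V| + 1 edges
    have hEcard : Fintype.card V + 1 ≤ (Set.univ : Set E).ncard := by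
      have hhs := handshake (G := G) (Set.univ : Set E)
      obtain ⟨v₀, hv₀⟩ : ∃ v : V, deg G Set.univ v ≠ 2 := by
        by_contra hcon
        push_neg at hcon
        exact hnotcyc ⟨⟨e₁, Set.mem_univ e₁⟩, conn_univ hG, fun v _ => hcon v⟩
      have hsum : 2 * Fintype.card V < ∑ v : V, deg G Set.univ v := by
        have := Finset.sum_lt_sum (s := Finset.univ) (f := fun _ : V => 2)
          (g := fun v => deg G Set.univ v) (fun i _ => hmd i)
          ⟨v₀, Finset.mem_univ _, by
            show (2 : ℕ) < deg G Set.univ v₀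
            have h1 := hmd v₀
            omega⟩
        rw [Finset.sum_const, smul_eq_mul, mul_comm] at this
        simpa using this
      omega
    -- per-side structure
    have hside : ∀ P Q : Set E, P ∪ Q = Set.univ → P ∩ Q = ∅ → Q.Nonempty →
        (∀ x ∈ P, (VX G (cmp G P x) ∩ VX G Q).Nonempty) ∧
        (∀ x ∈ P, Acyclic G (cmp G P x) → 2 ≤ (VX G (cmp G P x) ∩ VX G Q).ncard) := by
      intro P Q hPQu hPQd hQne
      have hPQcases : ∀ h : E, h ∈ P ∨ h ∈ Q := by
        intro h
        have : h ∈ P ∪ Q := hPQu ▸ Set.mem_univ h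
        exact this
      have hclosedK : ∀ x ∈ P, ∀ h ∈ P,
          (∃ v, v ∈ G.ends h ∧ v ∈ VX G (cmp G P x)) → h ∈ cmp G P x := by
        rintro x hx h hh ⟨v, hvh, k, hk, hvk⟩
        exact cmp_closed hk ⟨cmp_subset hk, hh, v, hvk, hvh⟩
      constructor
      · intro x hx
        obtain ⟨v, hv1, hv2⟩ := comp_touches hG hQne ⟨x, mem_cmp_self hx⟩
          (hclosedK x hx) hPQcases
        exact ⟨v, hv1, hv2⟩
      · intro x hx hac
        obtain ⟨u, w, huw, huVX, hwVX, hdu, hdw⟩ :=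
          tree_two_leaves (cmp_conn hx) hac ⟨x, mem_cmp_self hx⟩
        have hkey : ∀ z, z ∈ VX G (cmp G P x) → deg G (cmp G P x) z = 1 → z ∈ VX G Q := by
          intro z hz hdz
          obtain ⟨k₀, hk₀, hzk₀⟩ := hz
          have hPK : deg G P z = deg G (cmp G P x) z := by
            have hInc : {h ∈ P | z ∈ G.ends h} = {h ∈ cmp G P x | z ∈ G.ends h} := by
              ext h
              refine ⟨fun hh => ⟨?_, hh.2⟩, fun hh => ⟨cmp_subset hh.1, hh.2⟩⟩
              exact cmp_closed hk₀ ⟨cmp_subset hk₀, hh.1, z, hzk₀, hh.2⟩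
            have hLp : {h ∈ P | G.ends h = s(z, z)} =
                {h ∈ cmp G P x | G.ends h = s(z, z)} := by
              ext h
              refine ⟨fun hh => ⟨?_, hh.2⟩, fun hh => ⟨cmp_subset hh.1, hh.2⟩⟩
              exact cmp_closed hk₀ ⟨cmp_subset hk₀, hh.1, z, hzk₀, by rw [hh.2]; simp⟩
            unfold deg
            rw [hInc, hLp]
          have hsplit : deg G Set.univ z = deg G P z + deg G Q z := by
            conv_lhs => rw [← hPQu]
            exact deg_union hPQd
          have := hmd z
          exact mem_VX_of_deg (by omega)
        have hsub : ({u, w} : Set V) ⊆ VX G (cmp G P x) ∩ VX G Q := by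
          rintro z (rfl | rfl)
          · exact ⟨huVX, hkey z huVX hdu⟩
          · exact ⟨hwVX, hkey z hwVX hdw⟩
        calc 2 = ({u, w} : Set V).ncard := (Set.ncard_pair huw).symm
        _ ≤ _ := Set.ncard_le_ncard hsub (Set.toFinite _)
    obtain ⟨htouchA, hleafA⟩ := hside A B hABunion hABdisj ⟨f, hfB⟩
    obtain ⟨htouchB, hleafB⟩ := hside B A (by rw [Set.union_comm]; exact hABunion)
      (by rw [Set.inter_comm]; exact hABdisj) ⟨e, heA⟩
    have hagg1A := count_agg_aux (G := G) (VX G B) A.ncard A le_rfl htouchA hleafA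
    have hagg1B := count_agg_aux (G := G) (VX G A) B.ncard B le_rfl htouchB hleafB
    rw [Set.inter_comm] at hagg1B
    have haNcNA : aN G A ≤ cN G A :=
      Set.ncard_le_ncard (Set.sep_subset _ _) (Set.toFinite _)
    have haNcNB : aN G B ≤ cN G B :=
      Set.ncard_le_ncard (Set.sep_subset _ _) (Set.toFinite _)
    obtain ⟨IA, hIAsub, hIAno2, hIAcard⟩ := side_lemma (G := G) A
    obtain ⟨IB, hIBsub, hIBno2, hIBcard⟩ := side_lemma (G := G) B
    have hIno2 : ∀ W, W ⊆ IA ∪ IB → ConnOn G W → ¬TwoCycles G W := by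
      intro W hW hWconn h2W
      obtain ⟨Z, hZW, hZbic⟩ := bicycle_exists hWconn h2W
      have hZcirc : Circ M Z := (hMcirc Z).mpr hZbic
      rcases hsep Z hZcirc with hZA | hZdisj
      · have hZIA : Z ⊆ IA := by
          intro z hz
          rcases (hW (hZW hz)) with h | h
          · exact h
          · exact absurd (hZA hz) (hIBsub h).2
        exact hIAno2 Z hZIA hZbic.1.1 hZbic.1.2
      · have hZIB : Z ⊆ IB := by
          intro z hz
          rcases (hW (hZW hz)) with h | h
          · exact absurd (Set.eq_empty_iff_forall_notMem.mp hZdisj z ⟨hz, hIAsub h⟩)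
              not_false
          · exact h
        exact hIBno2 Z hZIB hZbic.1.1 hZbic.1.2
    have hub := no2cyc_card_aux (G := G) (IA ∪ IB).ncard (IA ∪ IB) le_rfl hIno2
    have hVXIle : (VX G (IA ∪ IB)).ncard ≤ Fintype.card V := by
      calc (VX G (IA ∪ IB)).ncard ≤ (Set.univ : Set V).ncard :=
            Set.ncard_le_ncard (Set.subset_univ _) (Set.toFinite _)
      _ = Fintype.card V := by rw [Set.ncard_univ, Nat.card_eq_fintype_card]
    have hdisjI : Disjoint IA IB := by
      rw [Set.disjoint_left]
      intro a ha ha'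
      exact (hIBsub ha').2 (hIAsub ha)
    have hIcard : (IA ∪ IB).ncard = IA.ncard + IB.ncard :=
      Set.ncard_union_eq hdisjI (Set.toFinite _) (Set.toFinite _)
    have hVAB : (VX G A).ncard + (VX G B).ncard
        = Fintype.card V + (VX G A ∩ VX G B).ncard := by
      have h1 : VX G A ∪ VX G B = Set.univ := by
        rw [← VX_union, hABunion, hVXuniv]
      have h2 := Set.ncard_union_add_ncard_inter (VX G A) (VX G B)
        (Set.toFinite _) (Set.toFinite _)
      rw [h1, Set.ncard_univ, Nat.card_eq_fintype_card] at h2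
      omega
    -- all components acyclic
    have haceqA : aN G A = cN G A := by omega
    have haceqB : aN G B = cN G B := by omega
    have hacA : ∀ x ∈ A, Acyclic G (cmp G A x) := by
      intro x hx
      have hseteq : {K ∈ CS G A | Acyclic G K} = CS G A :=
        Set.eq_of_subset_of_ncard_le (Set.sep_subset _ _) (by
          unfold aN at haceqA
          unfold cN at haceqA
          omega) (Set.toFinite _)
      have : cmp G A x ∈ {K ∈ CS G A | Acyclic G K} := by
        rw [hseteq]
        exact ⟨x, hx, rfl⟩
      exact this.2
    have hacB : ∀ x ∈ B, Acyclic G (cmp G B x) := by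
      intro x hx
      have hseteq : {K ∈ CS G B | Acyclic G K} = CS G B :=
        Set.eq_of_subset_of_ncard_le (Set.sep_subset _ _) (by
          unfold aN at haceqB
          unfold cN at haceqB
          omega) (Set.toFinite _)
      have : cmp G B x ∈ {K ∈ CS G B | Acyclic G K} := by
        rw [hseteq]
        exact ⟨x, hx, rfl⟩
      exact this.2
    have hfA2 := forest_card_aux (G := G) A.ncard A le_rfl hacA
    have hfB2 := forest_card_aux (G := G) B.ncard B le_rfl hacB
    have hEsplit : A.ncard + B.ncard = (Set.univ : Set E).ncard := by
      have hd : Disjoint A B := by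
        rw [Set.disjoint_iff_inter_eq_empty]
        exact hABdisj
      rw [← Set.ncard_union_eq hd (Set.toFinite _) (Set.toFinite _), hABunion]
    omega
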